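/- arXiv:1312.1207 — 6 statements merged into one kernel-verified Lean document; each statement's English description precedes it below -/
import Mathlib

section
/- Let X_1, ..., X_n be independent random variables, each with the same continuous distribution function F, and let M_n = max_{1≤i≤n} X_i. Then the random variable G := −log(−n · log F(M_n)) has a Gumbel distribution, and almost surely G ≤ −log( n (1 − F(M_n)) ) ≤ G + exp(−G)/n. -/
open MeasureTheory ProbabilityTheory Real

/-- For the maximum `M_n` of `n` independent random variables with common continuous
distribution function `F`, the variable `G := −log(−n log F(M_n))` is Gumbel
distributed and almost surely `G ≤ −log(n(1 − F(M_n))) ≤ G + exp(−G)/n`. -/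
theorem max_independent_gumbel_bound
    {Ω : Type*} [MeasurableSpace Ω] (μ : Measure Ω) [IsProbabilityMeasure μ]
    (n : ℕ) (hn : 0 < n)
    (X : Fin n → Ω → ℝ) (hXmeas : ∀ i, Measurable (X i))
    (hXindep : iIndepFun X μ)
    (F : ℝ → ℝ) (hFcont : Continuous F)
    (hF : ∀ i, ∀ x : ℝ, (μ {ω | X i ω ≤ x}).toReal = F x)
    (M : Ω → ℝ) (hM : ∀ ω, M ω = ⨆ i, X i ω)
    (G : Ω → ℝ) (hG : ∀ ω, G ω = -Real.log (-(n * Real.log (F (M ω))))) :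
    (∀ x : ℝ, μ {ω | G ω ≤ x} = ENNReal.ofReal (Real.exp (-Real.exp (-x)))) ∧
    (∀ᵐ ω ∂μ,
      G ω ≤ -Real.log (n * (1 - F (M ω))) ∧
      -Real.log (n * (1 - F (M ω))) ≤ G ω + Real.exp (-G ω) / n) := by
  haveI : Nonempty (Fin n) := Fin.pos_iff_nonempty.mp hn
  set i0 : Fin n := Classical.arbitrary (Fin n)
  have hnR : (0:ℝ) < n := Nat.cast_pos.mpr hn
  -- monotonicity and bounds of F
  have hFmono : Monotone F := by
    intro a b hab
    rw [← hF i0 a, ← hF i0 b]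
    exact ENNReal.toReal_mono (measure_ne_top μ _)
      (measure_mono fun ω h => le_trans h hab)
  have hF0 : ∀ x, 0 ≤ F x := fun x => (hF i0 x) ▸ ENNReal.toReal_nonneg
  have hF1 : ∀ x, F x ≤ 1 := by
    intro x
    rw [← hF i0 x]
    exact ENNReal.toReal_le_of_le_ofReal zero_le_one (by simpa using prob_le_one)
  -- F is the cdf of the law of X i0
  set ν : Measure ℝ := μ.map (X i0) with hν
  haveI : IsProbabilityMeasure ν := Measure.isProbabilityMeasure_map (hXmeas i0).aemeasurable
  have hFcdf : ∀ x, F x = cdf ν x := by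
    intro x
    rw [cdf_eq_real, measureReal_def, hν, Measure.map_apply (hXmeas i0) measurableSet_Iic, ← hF i0 x]
    rfl
  have htop : Filter.Tendsto F Filter.atTop (nhds 1) := by
    have := tendsto_cdf_atTop ν
    refine this.congr fun x => (hFcdf x).symm
  have hbot : Filter.Tendsto F Filter.atBot (nhds 0) := by
    have := tendsto_cdf_atBot ν
    refine this.congr fun x => (hFcdf x).symm
  -- surjectivity of F onto (0,1)
  have hsurj : ∀ u : ℝ, 0 < u → u < 1 → ∃ x, F x = u := by
    intro u hu0 hu1
    obtain ⟨a, ha⟩ := (hbot.eventually (gt_mem_nhds hu0)).exists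
    obtain ⟨b, hb⟩ := (htop.eventually (lt_mem_nhds hu1)).exists
    have hab : a ≤ b := by
      by_contra h
      exact absurd (hFmono (le_of_not_ge h)) (not_le.mpr (lt_trans ha hb))
    obtain ⟨x, _, hx⟩ := intermediate_value_Icc hab hFcont.continuousOn
      ⟨le_of_lt ha, le_of_lt hb⟩
    exact ⟨x, hx⟩
  -- basic facts about M
  have hbdd : ∀ ω, BddAbove (Set.range fun i => X i ω) :=
    fun ω => (Set.finite_range _).bddAbove
  have hXiM : ∀ ω i, X i ω ≤ M ω := by
    intro ω i; rw [hM]; exact le_ciSup (hbdd ω) i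
  have hMattain : ∀ ω, ∃ j, M ω = X j ω := by
    intro ω
    obtain ⟨j, hj⟩ := Finite.exists_max fun i => X i ω
    exact ⟨j, le_antisymm ((hM ω) ▸ ciSup_le hj) (hXiM ω j)⟩
  have hMle : ∀ ω x, M ω ≤ x ↔ ∀ i, X i ω ≤ x := by
    intro ω x
    constructor
    · intro h i; exact le_trans (hXiM ω i) h
    · intro h; rw [hM]; exact ciSup_le h
  -- measure of {M ≤ x}
  have hMx : ∀ x : ℝ, μ {ω | M ω ≤ x} = ENNReal.ofReal ((F x) ^ n) := by
    intro x
    have hset : {ω | M ω ≤ x} = ⋂ i ∈ Finset.univ, X i ⁻¹' Set.Iic x := by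
      ext ω
      simp only [Set.mem_setOf_eq, Set.mem_iInter, Set.mem_preimage, Set.mem_Iic,
        Finset.mem_univ, forall_const]
      exact hMle ω x
    rw [hset, hXindep.measure_inter_preimage_eq_mul Finset.univ
      (sets := fun _ => Set.Iic x) (fun i _ => measurableSet_Iic)]
    have hone : ∀ i : Fin n, μ (X i ⁻¹' Set.Iic x) = ENNReal.ofReal (F x) := by
      intro i
      have : μ (X i ⁻¹' Set.Iic x) = μ {ω | X i ω ≤ x} := rfl
      rw [this, ← hF i x, ENNReal.ofReal_toReal (measure_ne_top μ _)]
    simp only [hone]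
    rw [Finset.prod_const, ENNReal.ofReal_pow (hF0 x)]
    simp
  -- measurability of level sets of F ∘ M
  have hsetFM : ∀ v : ℝ, {ω | F (M ω) ≤ v} = ⋂ i, X i ⁻¹' (F ⁻¹' Set.Iic v) := by
    intro v
    ext ω
    simp only [Set.mem_setOf_eq, Set.mem_iInter, Set.mem_preimage, Set.mem_Iic]
    constructor
    · intro h i; exact le_trans (hFmono (hXiM ω i)) h
    · intro h
      obtain ⟨j, hj⟩ := hMattain ω
      rw [hj]; exact h j
  have hmeasFM : ∀ v : ℝ, MeasurableSet {ω | F (M ω) ≤ v} := by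
    intro v
    rw [hsetFM]
    exact MeasurableSet.iInter fun i =>
      (hXmeas i) (hFcont.measurable measurableSet_Iic)
  -- the key distribution computation
  have hub : ∀ u v : ℝ, 0 < u → u < v → v < 1 →
      μ {ω | F (M ω) ≤ u} ≤ ENNReal.ofReal (v ^ n) := by
    intro u v hu0 huv hv1
    obtain ⟨xv, hxv⟩ := hsurj v (lt_trans hu0 huv) hv1
    have hsub : {ω | F (M ω) ≤ u} ⊆ {ω | M ω ≤ xv} := by
      intro ω h
      by_contra hc
      have : F xv ≤ F (M ω) := hFmono (le_of_lt (not_le.mp hc))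
      rw [hxv] at this
      exact absurd (le_trans this h) (not_le.mpr huv)
    calc μ {ω | F (M ω) ≤ u} ≤ μ {ω | M ω ≤ xv} := measure_mono hsub
      _ = ENNReal.ofReal ((F xv) ^ n) := hMx xv
      _ = ENNReal.ofReal (v ^ n) := by rw [hxv]
  have hseq : ∀ u : ℝ, u < 1 → ∃ v : ℕ → ℝ,
      (∀ k, u < v k ∧ v k < 1) ∧ Filter.Tendsto v Filter.atTop (nhds u) := by
    intro u hu1
    refine ⟨fun k => u + (1 - u) * ((k : ℝ) + 2)⁻¹, fun k => ?_, ?_⟩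
    · have hk2 : (0:ℝ) < (k : ℝ) + 2 := by positivity
      constructor
      · nlinarith [inv_pos.mpr hk2]
      · have h1 : ((k : ℝ) + 2)⁻¹ < 1 := by
          rw [inv_lt_one_iff₀]; right; linarith [Nat.cast_nonneg (α := ℝ) k]
        nlinarith [inv_pos.mpr hk2]
    · have h0 : Filter.Tendsto (fun k : ℕ => ((k : ℝ) + 2)⁻¹) Filter.atTop (nhds 0) :=
        Filter.Tendsto.inv_tendsto_atTop
          (Filter.tendsto_atTop_add_const_right _ 2 tendsto_natCast_atTop_atTop)
      have := (h0.const_mul (1 - u)).const_add u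
      simpa using this
  have hFMu : ∀ u : ℝ, 0 < u → u < 1 →
      μ {ω | F (M ω) ≤ u} = ENNReal.ofReal (u ^ n) := by
    intro u hu0 hu1
    refine le_antisymm ?_ ?_
    · obtain ⟨v, hv, hvt⟩ := hseq u hu1
      refine ge_of_tendsto' (ENNReal.tendsto_ofReal ((hvt.pow n))) fun k => ?_
      exact hub u (v k) hu0 (hv k).1 (hv k).2
    · obtain ⟨x0, hx0⟩ := hsurj u hu0 hu1
      have hsub : {ω | M ω ≤ x0} ⊆ {ω | F (M ω) ≤ u} := by
        intro ω h
        exact hx0 ▸ hFmono h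
      calc ENNReal.ofReal (u ^ n) = μ {ω | M ω ≤ x0} := by rw [hMx, hx0]
        _ ≤ μ {ω | F (M ω) ≤ u} := measure_mono hsub
  -- null sets
  have hN0 : μ {ω | F (M ω) = 0} = 0 := by
    obtain ⟨v, hv, hvt⟩ := hseq 0 one_pos
    refine le_antisymm ?_ zero_le
    have : Filter.Tendsto (fun k => ENNReal.ofReal (v k)) Filter.atTop (nhds 0) := by
      simpa using (ENNReal.tendsto_ofReal hvt)
    refine ge_of_tendsto' this fun k => ?_
    have hsub : {ω | F (M ω) = 0} ⊆ {ω | F (M ω) ≤ v k} :=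
      fun ω h => h.le.trans (hv k).1.le
    calc μ {ω | F (M ω) = 0} ≤ μ {ω | F (M ω) ≤ v k} := measure_mono hsub
      _ = ENNReal.ofReal ((v k) ^ n) := hFMu _ (hv k).1 (hv k).2
      _ ≤ ENNReal.ofReal (v k) := ENNReal.ofReal_le_ofReal
          (pow_le_of_le_one (hv k).1.le (hv k).2.le hn.ne')
  have hN1 : μ {ω | F (M ω) = 1} = 0 := by
    have key : ∀ v : ℝ, 0 < v → v < 1 →
        (μ {ω | F (M ω) = 1}).toReal ≤ 1 - v ^ n := by
      intro v hv0 hv1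
      have hdisj : Disjoint {ω | F (M ω) = 1} {ω | F (M ω) ≤ v} := by
        rw [Set.disjoint_left]
        intro ω h1 h2
        rw [Set.mem_setOf_eq] at h1 h2
        rw [h1] at h2
        exact absurd h2 (not_le.mpr hv1)
      have hun : μ ({ω | F (M ω) = 1} ∪ {ω | F (M ω) ≤ v}) =
          μ {ω | F (M ω) = 1} + μ {ω | F (M ω) ≤ v} :=
        measure_union hdisj (hmeasFM v)
      have hle1 : μ ({ω | F (M ω) = 1} ∪ {ω | F (M ω) ≤ v}) ≤ 1 := prob_le_one
      have := hun ▸ hle1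
      have h2 : μ {ω | F (M ω) = 1} + ENNReal.ofReal (v ^ n) ≤ 1 := by
        rwa [hFMu v hv0 hv1] at this
      have h3 := ENNReal.toReal_mono ENNReal.one_ne_top h2
      rw [ENNReal.toReal_add (measure_ne_top μ _) ENNReal.ofReal_ne_top,
        ENNReal.toReal_ofReal (by positivity), ENNReal.toReal_one] at h3
      linarith
    obtain ⟨v, hv, hvt⟩ := hseq 0 one_pos
    have hv2 : ∀ k, 0 < 1 - v k ∧ 1 - v k < 1 := fun k => ⟨by linarith [(hv k).2], by linarith [(hv k).1]⟩
    have hvt2 : Filter.Tendsto (fun k => 1 - (1 - v k) ^ n) Filter.atTop (nhds 0) := by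
      have : Filter.Tendsto (fun k => 1 - v k) Filter.atTop (nhds 1) := by
        simpa using (tendsto_const_nhds.sub hvt)
      have := (this.pow n).const_sub 1
      simpa using this
    have htr : (μ {ω | F (M ω) = 1}).toReal ≤ 0 :=
      ge_of_tendsto' hvt2 fun k => key _ (hv2 k).1 (hv2 k).2
    have : (μ {ω | F (M ω) = 1}).toReal = 0 := le_antisymm htr ENNReal.toReal_nonneg
    exact (ENNReal.toReal_eq_zero_iff _).mp this |>.resolve_right (measure_ne_top μ _)
  have hae : ∀ᵐ ω ∂μ, 0 < F (M ω) ∧ F (M ω) < 1 := by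
    have h0 : ∀ᵐ ω ∂μ, ¬ (F (M ω) = 0) := by
      rw [ae_iff]; simpa using hN0
    have h1 : ∀ᵐ ω ∂μ, ¬ (F (M ω) = 1) := by
      rw [ae_iff]; simpa using hN1
    filter_upwards [h0, h1] with ω hω0 hω1
    exact ⟨lt_of_le_of_ne (hF0 _) (Ne.symm hω0), lt_of_le_of_ne (hF1 _) hω1⟩
  constructor
  · -- distribution of G
    intro x
    set u : ℝ := Real.exp (-(Real.exp (-x) / n)) with hu
    have hu0 : 0 < u := Real.exp_pos _
    have hu1 : u < 1 := by
      rw [hu, Real.exp_lt_one_iff]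
      have : 0 < Real.exp (-x) / n := by positivity
      linarith
    have haeeq : {ω | G ω ≤ x} =ᵐ[μ] {ω | F (M ω) ≤ u} := by
      rw [Filter.eventuallyEq_set]
      filter_upwards [hae] with ω ⟨hp0, hp1⟩
      show G ω ≤ x ↔ F (M ω) ≤ u
      have hlog : Real.log (F (M ω)) < 0 := Real.log_neg hp0 hp1
      have hU : 0 < -((n : ℝ) * Real.log (F (M ω))) := by nlinarith
      rw [hG ω]
      constructor
      · intro h
        have h2 : -x ≤ Real.log (-((n : ℝ) * Real.log (F (M ω)))) := by linarith
        rw [Real.le_log_iff_exp_le hU] at h2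
        have h3 : Real.log (F (M ω)) ≤ -(Real.exp (-x) / n) := by
          rw [le_neg] at h2 ⊢
          rw [div_le_iff₀ hnR]
          nlinarith
        rw [← Real.exp_log hp0, hu]
        exact Real.exp_le_exp.mpr h3
      · intro h
        have h3 : Real.log (F (M ω)) ≤ -(Real.exp (-x) / n) := by
          rw [← Real.log_exp (-(Real.exp (-x) / n))]
          exact Real.log_le_log hp0 h
        have h2 : Real.exp (-x) ≤ -((n : ℝ) * Real.log (F (M ω))) := by
          rw [le_neg]
          rw [le_neg, div_le_iff₀ hnR] at h3
          nlinarith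
        rw [← Real.le_log_iff_exp_le hU] at h2
        linarith
    have hun : u ^ n = Real.exp (-Real.exp (-x)) := by
      rw [hu, ← Real.exp_nat_mul]
      congr 1
      field_simp
    rw [measure_congr haeeq, hFMu u hu0 hu1, hun]
  · -- almost sure inequalities
    filter_upwards [hae] with ω ⟨hp0, hp1⟩
    set p := F (M ω) with hp
    have hlog : Real.log p < 0 := Real.log_neg hp0 hp1
    set U : ℝ := -((n : ℝ) * Real.log p) with hUdef
    have hU : 0 < U := by rw [hUdef]; nlinarith
    have hGU : G ω = -Real.log U := hG ω
    have hexpG : Real.exp (-G ω) = U := by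
      rw [hGU, neg_neg, Real.exp_log hU]
    have hUn : U / n = -Real.log p := by
      rw [hUdef]; field_simp
    have h1p : 0 < 1 - p := by linarith
    have hnp : 0 < (n : ℝ) * (1 - p) := by positivity
    constructor
    · -- G ≤ -log(n(1-p))
      rw [hGU, neg_le_neg_iff]
      apply Real.log_le_log hnp
      have : Real.log p ≤ p - 1 := Real.log_le_sub_one_of_pos hp0
      rw [hUdef]
      nlinarith
    · -- -log(n(1-p)) ≤ G + exp(-G)/n
      rw [hGU, neg_neg, Real.exp_log hU, hUn]
      have hkey : Real.log U + Real.log p ≤ Real.log ((n:ℝ) * (1 - p)) := by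
        rw [← Real.log_mul (ne_of_gt hU) (ne_of_gt hp0)]
        apply Real.log_le_log (by positivity)
        have hinv : Real.log p⁻¹ ≤ p⁻¹ - 1 :=
          Real.log_le_sub_one_of_pos (by positivity)
        rw [Real.log_inv] at hinv
        have : -Real.log p * p ≤ 1 - p := by
          have := mul_le_mul_of_nonneg_right hinv (le_of_lt hp0)
          calc -Real.log p * p ≤ (p⁻¹ - 1) * p := this
            _ = 1 - p := by field_simp
        rw [hUdef]
        nlinarith
      linarith
end

section
/- Let F be a continuous distribution function, and for each n let M_n be the maximum of n independent random variables each with distribution function F. Then the random variables −log n − log(1 − F(M_n)) converge in distribution, as n → ∞, to the Gumbel distribution; that is, for every real x, P( −log n − log(1 − F(M_n)) ≤ x ) → exp(−exp(−x)). -/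
open MeasureTheory ProbabilityTheory Real Filter

/-- For `M_n` the maximum of `n` i.i.d. random variables with common continuous
distribution function `F`, the variables `−log n − log(1 − F(M_n))` converge in
distribution to the Gumbel distribution. -/
theorem max_iid_gumbel_limit
    {Ω : Type*} [MeasurableSpace Ω] (μ : Measure Ω) [IsProbabilityMeasure μ]
    (X : ℕ → Ω → ℝ) (hXmeas : ∀ i, Measurable (X i))
    (hXindep : iIndepFun X μ)
    (F : ℝ → ℝ) (hFcont : Continuous F)
    (hF : ∀ i, ∀ x : ℝ, (μ {ω | X i ω ≤ x}).toReal = F x)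
    (M : ℕ → Ω → ℝ) (hM : ∀ n, ∀ ω, M n ω = ⨆ i : Fin n, X i ω) :
    ∀ x : ℝ,
      Tendsto (fun n : ℕ =>
          (μ {ω | -Real.log n - Real.log (1 - F (M n ω)) ≤ x}).toReal)
        atTop (nhds (Real.exp (-Real.exp (-x)))) := by
  intro x
  -- Basic facts about F
  have hFmono : Monotone F := by
    intro a b hab
    rw [← hF 0 a, ← hF 0 b]
    exact ENNReal.toReal_mono (measure_ne_top μ _)
      (measure_mono fun ω (h : X 0 ω ≤ a) => h.trans hab)
  have hF01 : ∀ a, 0 ≤ F a ∧ F a ≤ 1 := by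
    intro a
    rw [← hF 0 a]
    exact ⟨ENNReal.toReal_nonneg, by
      simpa using ENNReal.toReal_mono (measure_ne_top μ Set.univ)
        (measure_mono (Set.subset_univ _))⟩
  -- F equals the cdf of the law of X 0, hence has the right limits
  have hν : IsProbabilityMeasure (μ.map (X 0)) :=
    Measure.isProbabilityMeasure_map (hXmeas 0).aemeasurable
  have hFcdf : ∀ a, F a = cdf (μ.map (X 0)) a := by
    intro a
    rw [cdf_eq_real, measureReal_def, Measure.map_apply (hXmeas 0) measurableSet_Iic, ← hF 0 a]
    rfl
  have hFtop : Tendsto F atTop (nhds 1) := by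
    have := tendsto_cdf_atTop (μ.map (X 0))
    exact this.congr fun a => (hFcdf a).symm
  have hFbot : Tendsto F atBot (nhds 0) := by
    have := tendsto_cdf_atBot (μ.map (X 0))
    exact this.congr fun a => (hFcdf a).symm
  -- surjectivity onto (0,1)
  have hsurj : ∀ s : ℝ, 0 < s → s < 1 → ∃ y, F y = s := by
    intro s hs0 hs1
    obtain ⟨b, hb⟩ := (hFtop.eventually (eventually_gt_nhds hs1)).exists
    obtain ⟨a, ha⟩ := (hFbot.eventually (eventually_lt_nhds hs0)).exists
    have hab : a ≤ b := by
      by_contra h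
      exact absurd (hFmono (le_of_not_ge h)) (not_le.2 (ha.trans hb))
    have : s ∈ Set.Icc (F a) (F b) := ⟨ha.le, hb.le⟩
    obtain ⟨y, _, hy⟩ := intermediate_value_Icc hab hFcont.continuousOn this
    exact ⟨y, hy⟩
  -- key single-variable computation
  have hmeasB : ∀ s : ℝ, MeasurableSet (F ⁻¹' Set.Iic s) :=
    fun s => (hFcont.measurable) measurableSet_Iic
  have hkey : ∀ s : ℝ, 0 < s → s < 1 → ∀ i,
      (μ (X i ⁻¹' (F ⁻¹' Set.Iic s))).toReal = s := by
    intro s hs0 hs1 i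
    obtain ⟨y, hy⟩ := hsurj s hs0 hs1
    have hlow : F y ≤ (μ (X i ⁻¹' (F ⁻¹' Set.Iic s))).toReal := by
      rw [← hF i y]
      refine ENNReal.toReal_mono (measure_ne_top μ _) (measure_mono ?_)
      intro ω (h : X i ω ≤ y)
      exact (hFmono h).trans_eq hy
    have hupp : ∀ s', s < s' → s' < 1 →
        (μ (X i ⁻¹' (F ⁻¹' Set.Iic s))).toReal ≤ s' := by
      intro s' hss' hs'1
      obtain ⟨y', hy'⟩ := hsurj s' (hs0.trans hss') hs'1
      rw [← hy', ← hF i y']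
      refine ENNReal.toReal_mono (measure_ne_top μ _) (measure_mono ?_)
      intro ω (h : F (X i ω) ≤ s)
      by_contra hc
      have : F y' ≤ F (X i ω) := hFmono (le_of_not_ge hc)
      rw [hy'] at this
      linarith
    refine le_antisymm ?_ (hy ▸ hlow)
    by_contra hc
    push_neg at hc
    set p := (μ (X i ⁻¹' (F ⁻¹' Set.Iic s))).toReal
    have h1 : p ≤ 1 := by
      simpa using ENNReal.toReal_mono (measure_ne_top μ Set.univ)
        (measure_mono (Set.subset_univ _))
    have := hupp ((s + min p 1) / 2) (by
      have : s < min p 1 := lt_min hc hs1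
      linarith) (by
      have : min p 1 ≤ 1 := min_le_right _ _
      linarith)
    have hmp : min p 1 = p := min_eq_left h1
    rw [hmp] at this
    linarith
  -- F (X i ω) = 1 is a null event
  have hnull : ∀ i, μ {ω | F (X i ω) = 1} = 0 := by
    intro i
    have hb : ∀ s : ℝ, 0 < s → s < 1 → (μ {ω | F (X i ω) = 1}).toReal ≤ 1 - s := by
      intro s hs0 hs1
      have hcompl : {ω | F (X i ω) = 1} ⊆ (X i ⁻¹' (F ⁻¹' Set.Iic s))ᶜ := by
        intro ω (h : F (X i ω) = 1)
        simp only [Set.mem_compl_iff, Set.mem_preimage, Set.mem_Iic, not_le, h]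
        exact hs1
      have hmc : MeasurableSet (X i ⁻¹' (F ⁻¹' Set.Iic s)) := hXmeas i (hmeasB s)
      have := ENNReal.toReal_mono (measure_ne_top μ _) (measure_mono hcompl)
      refine this.trans ?_
      rw [measure_compl hmc (measure_ne_top μ _)]
      rw [ENNReal.toReal_sub_of_le (measure_mono (Set.subset_univ _)) (measure_ne_top μ _)]
      rw [measure_univ, ENNReal.toReal_one, hkey s hs0 hs1 i]
    have hp0 : (μ {ω | F (X i ω) = 1}).toReal ≤ 0 := by
      by_contra hc
      push_neg at hc
      set p := (μ {ω | F (X i ω) = 1}).toReal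
      have := hb (max (1 - p / 2) (1 / 2)) (by positivity)
        (by
          have h1 : 1 - p / 2 < 1 := by linarith
          have h2 : (1:ℝ)/2 < 1 := by norm_num
          exact max_lt h1 h2)
      have : p ≤ 1 - max (1 - p / 2) (1/2) := this
      have h3 : 1 - p/2 ≤ max (1 - p / 2) (1/2) := le_max_left _ _
      linarith
    exact (ENNReal.toReal_eq_zero_iff _).mp (le_antisymm hp0 ENNReal.toReal_nonneg) |>.resolve_right
      (measure_ne_top μ _)
  -- main computation for large n
  have hmain : ∀ n : ℕ, Real.exp (-x) < n →
      (μ {ω | -Real.log n - Real.log (1 - F (M n ω)) ≤ x}).toReal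
        = (1 + (-Real.exp (-x)) / n) ^ n := by
    intro n hn
    have hn0 : (0:ℝ) < n := lt_trans (Real.exp_pos _) hn
    have hn1 : 1 ≤ n := by exact_mod_cast Nat.one_le_iff_ne_zero.2 (by
      rintro rfl; exact absurd hn0 (by norm_num))
    set s : ℝ := 1 - Real.exp (-x) / n with hs_def
    have hs0 : 0 < s := by
      have : Real.exp (-x) / n < 1 := (div_lt_one hn0).2 hn
      simp only [hs_def]; linarith
    have hs1 : s < 1 := by
      have : 0 < Real.exp (-x) / n := by positivity
      simp only [hs_def]; linarith
    -- the maximum is attained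
    have hnpos : 0 < n := by exact_mod_cast hn0
    haveI : Nonempty (Fin n) := ⟨⟨0, hnpos⟩⟩
    have hMattain : ∀ ω, ∃ j : Fin n, M n ω = X j ω ∧ ∀ i : Fin n, X i ω ≤ M n ω := by
      intro ω
      obtain ⟨j, hj⟩ := Finite.exists_max (fun i : Fin n => X i ω)
      have hbdd : BddAbove (Set.range fun i : Fin n => X i ω) :=
        (Set.finite_range _).bddAbove
      refine ⟨j, ?_, fun i => ?_⟩
      · rw [hM n ω]
        exact le_antisymm (ciSup_le hj) (le_ciSup hbdd j)
      · rw [hM n ω]; exact le_ciSup hbdd i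
    -- the event decomposition
    have hseteq : {ω | -Real.log n - Real.log (1 - F (M n ω)) ≤ x}
        = (⋂ i ∈ Finset.range n, X i ⁻¹' (F ⁻¹' Set.Iic s))
          ∪ {ω | F (M n ω) = 1} := by
      ext ω
      obtain ⟨j, hj, hle⟩ := hMattain ω
      have hFM0 : 0 ≤ F (M n ω) := (hF01 _).1
      have hFM1 : F (M n ω) ≤ 1 := (hF01 _).2
      simp only [Set.mem_setOf_eq, Set.mem_union, Set.mem_iInter, Set.mem_preimage,
        Set.mem_Iic, Finset.mem_range]
      constructor
      · intro h
        rcases eq_or_lt_of_le hFM1 with heq | hlt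
        · exact Or.inr heq
        · left
          intro i hi
          have h1 : 0 < 1 - F (M n ω) := by linarith
          have h2 : -x - Real.log n ≤ Real.log (1 - F (M n ω)) := by linarith
          have h3 : Real.exp (-x - Real.log n) ≤ 1 - F (M n ω) := by
            calc Real.exp (-x - Real.log n) ≤ Real.exp (Real.log (1 - F (M n ω))) :=
                  Real.exp_le_exp.2 h2
              _ = 1 - F (M n ω) := Real.exp_log h1
          have h4 : Real.exp (-x - Real.log n) = Real.exp (-x) / n := by
            rw [Real.exp_sub, Real.exp_log hn0]
          have hFMs : F (M n ω) ≤ s := by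
            rw [hs_def]; rw [h4] at h3; linarith
          exact (hFmono (hle ⟨i, hi⟩)).trans hFMs
      · rintro (h | h)
        · have hFMs : F (M n ω) ≤ s := by
            rw [hj]
            exact h j j.2
          have h1 : Real.exp (-x) / n ≤ 1 - F (M n ω) := by
            rw [hs_def] at hFMs; linarith
          have h2 : 0 < 1 - F (M n ω) := lt_of_lt_of_le (by positivity) h1
          have h3 : -x - Real.log n ≤ Real.log (1 - F (M n ω)) := by
            rw [← Real.exp_log hn0, ← Real.exp_sub] at h1
            exact (Real.le_log_iff_exp_le h2).2 h1
          linarith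
        · rw [h]
          simp only [sub_self, Real.log_zero, sub_zero]
          have : Real.exp (-x) ≤ n := hn.le
          have := (Real.le_log_iff_exp_le hn0).2 this
          linarith
      -- end hsetq
    have hdisj : μ ({ω | F (M n ω) = 1}) = 0 := by
      have hsub : {ω | F (M n ω) = 1} ⊆ ⋃ i ∈ Finset.range n, {ω | F (X i ω) = 1} := by
        intro ω (h : F (M n ω) = 1)
        obtain ⟨j, hj, _⟩ := hMattain ω
        simp only [Set.mem_iUnion, Finset.mem_range, Set.mem_setOf_eq]
        exact ⟨j, j.2, by rw [← hj]; exact h⟩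
      refine le_antisymm ((measure_mono hsub).trans ?_) zero_le
      refine le_trans (measure_biUnion_finset_le _ _) ?_
      simp [hnull]
    have hμeq : μ {ω | -Real.log n - Real.log (1 - F (M n ω)) ≤ x}
        = μ (⋂ i ∈ Finset.range n, X i ⁻¹' (F ⁻¹' Set.Iic s)) := by
      rw [hseteq]
      refine le_antisymm ((measure_union_le _ _).trans ?_) (measure_mono Set.subset_union_left)
      simp [hdisj]
    rw [hμeq]
    have hindep := hXindep.meas_biInter (S := Finset.range n)
      (s := fun i => X i ⁻¹' (F ⁻¹' Set.Iic s))
      (fun i _ => ⟨F ⁻¹' Set.Iic s, hmeasB s, rfl⟩)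
    rw [hindep, ENNReal.toReal_prod]
    have : ∀ i ∈ Finset.range n, (μ (X i ⁻¹' (F ⁻¹' Set.Iic s))).toReal = s :=
      fun i _ => hkey s hs0 hs1 i
    rw [Finset.prod_congr rfl this, Finset.prod_const, Finset.card_range]
    congr 1
    rw [hs_def]
    ring
  -- conclude
  have hlim := Real.tendsto_one_add_div_pow_exp (-Real.exp (-x))
  refine Tendsto.congr' ?_ hlim
  have hev : ∀ᶠ n : ℕ in atTop, Real.exp (-x) < n := by
    obtain ⟨N, hN⟩ := exists_nat_gt (Real.exp (-x))
    exact eventually_atTop.2 ⟨N, fun n hn => hN.trans_le (by exact_mod_cast hn)⟩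
  filter_upwards [hev] with n hn
  exact (hmain n hn).symm
end

section
/- For a real number x, let V = V(x) = −2 log(1 − Φ(x)) − log(2π). Then for every x ≥ 2, V − log V ≤ x². -/
open ProbabilityTheory Real MeasureTheory Set Filter Topology

/-- The standard normal cumulative distribution function `Φ`. -/
noncomputable def stdGaussianCDF (x : ℝ) : ℝ :=
  (ProbabilityTheory.gaussianReal 0 1 (Set.Iic x)).toReal

namespace GaussTailAux

noncomputable def phi (t : ℝ) : ℝ := (Real.sqrt (2 * π))⁻¹ * Real.exp (-t ^ 2 / 2)

lemma phi_pos (t : ℝ) : 0 < phi t := by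
  have h : (0:ℝ) < Real.sqrt (2 * π) := Real.sqrt_pos.2 (by positivity)
  exact mul_pos (inv_pos.2 h) (Real.exp_pos _)

lemma pdf_eq : gaussianPDFReal 0 1 = phi := by
  funext t
  simp [gaussianPDFReal, phi]

lemma continuous_phi : Continuous phi := by
  unfold phi
  fun_prop

lemma integrable_phi : Integrable phi := pdf_eq ▸ integrable_gaussianPDFReal 0 1

lemma hasDerivAt_phi (t : ℝ) : HasDerivAt phi (-t * phi t) t := by
  have h1 : HasDerivAt (fun s : ℝ => -s ^ 2 / 2) (-(2*t)/2) t := by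
    simpa using ((hasDerivAt_pow 2 t).neg).div_const 2
  have h2 := (h1.exp).const_mul (Real.sqrt (2 * π))⁻¹
  refine h2.congr_deriv ?_
  unfold phi
  ring

lemma tendsto_phi : Tendsto phi atTop (𝓝 0) := by
  have hsq : Tendsto (fun t : ℝ => t ^ 2) atTop atTop := tendsto_pow_atTop (by norm_num)
  have h1 : Tendsto (fun t : ℝ => -t ^ 2 / 2) atTop atBot := by
    apply Tendsto.atBot_div_const (by norm_num)
    exact tendsto_neg_atTop_atBot.comp hsq
  have h2 := (Real.tendsto_exp_atBot.comp h1).const_mul (Real.sqrt (2 * π))⁻¹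
  rw [mul_zero] at h2
  exact h2

lemma tail_eq (x : ℝ) : 1 - stdGaussianCDF x = ∫ t in Ioi x, phi t := by
  have hint : Integrable phi := integrable_phi
  have htot : ∫ t, phi t = 1 := pdf_eq ▸ integral_gaussianPDFReal_eq_one 0 one_ne_zero
  have hsplit : (∫ t in Iic x, phi t) + ∫ t in Ioi x, phi t = 1 := by
    rw [intervalIntegral.integral_Iic_add_Ioi hint.integrableOn hint.integrableOn]
    exact htot
  have hcdf : stdGaussianCDF x = ∫ t in Iic x, phi t := by
    rw [stdGaussianCDF, gaussianReal_apply_eq_integral 0 one_ne_zero, ENNReal.toReal_ofReal]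
    · rw [pdf_eq]
    · rw [pdf_eq]
      exact setIntegral_nonneg measurableSet_Iic fun t _ => (phi_pos t).le
  rw [hcdf]; linarith

section FTC

variable (c : ℝ) (p q p' q' : ℝ → ℝ)

/-- Helper: integrability of `phi * (1 + c/q^2)` on `Ioi x` when `|c| ≤ q t ^ 2`. -/
lemma aux_integrable (hqc : Continuous q)
    (hqpos : ∀ t, 2 ≤ t → 0 < q t) (hc : ∀ t, 2 ≤ t → |c| ≤ q t ^ 2)
    (x : ℝ) (hx : 2 ≤ x) :
    IntegrableOn (fun t => phi t * (1 + c / q t ^ 2)) (Ioi x) := by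
  apply Integrable.mono' ((integrable_phi.restrict (s := Ioi x)).const_mul 2)
  · apply ContinuousOn.aestronglyMeasurable _ measurableSet_Ioi
    apply ContinuousOn.mul continuous_phi.continuousOn
    apply ContinuousOn.add continuousOn_const
    apply ContinuousOn.div continuousOn_const (hqc.pow 2).continuousOn
    intro t ht
    have := hqpos t (le_trans hx (le_of_lt ht))
    show q t ^ 2 ≠ 0
    positivity
  · filter_upwards [ae_restrict_mem measurableSet_Ioi] with t ht
    have ht2 : (2:ℝ) ≤ t := le_trans hx (le_of_lt ht)
    have hq2 : 0 < q t ^ 2 := by have := hqpos t ht2; positivity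
    have hb : |1 + c / q t ^ 2| ≤ 2 := by
      have h1 : |c / q t ^ 2| ≤ 1 := by
        rw [abs_div, abs_of_pos hq2, div_le_one hq2]
        exact hc t ht2
      calc |1 + c / q t ^ 2| ≤ |(1:ℝ)| + |c / q t ^ 2| := abs_add_le _ _
        _ ≤ 1 + 1 := by rw [abs_one]; linarith
        _ = 2 := by norm_num
    rw [norm_mul, Real.norm_eq_abs, Real.norm_eq_abs, abs_of_pos (phi_pos t)]
    calc phi t * |1 + c / q t ^ 2| ≤ phi t * 2 := by
          exact mul_le_mul_of_nonneg_left hb (phi_pos t).le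
      _ = 2 * phi t := by ring

lemma aux_integral (hp : ∀ t, HasDerivAt p (p' t) t) (hq : ∀ t, HasDerivAt q (q' t) t)
    (hqpos : ∀ t, 2 ≤ t → 0 < q t) (hc : ∀ t, 2 ≤ t → |c| ≤ q t ^ 2)
    (hkey : ∀ t, t * p t * q t - p' t * q t + p t * q' t = q t ^ 2 + c)
    (hbound : ∀ t, 2 ≤ t → 0 ≤ p t ∧ p t ≤ q t)
    (x : ℝ) (hx : 2 ≤ x) :
    ∫ t in Ioi x, phi t * (1 + c / q t ^ 2) = phi x * (p x / q x) := by
  have hqc : Continuous q := by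
    rw [continuous_iff_continuousAt]; exact fun t => (hq t).continuousAt
  have hpc : Continuous p := by
    rw [continuous_iff_continuousAt]; exact fun t => (hp t).continuousAt
  have hderiv : ∀ t ∈ Ici x, HasDerivAt (fun t => -(phi t * (p t / q t)))
      (phi t * (1 + c / q t ^ 2)) t := by
    intro t ht
    have ht2 : (2:ℝ) ≤ t := le_trans hx ht
    have hqne : q t ≠ 0 := (hqpos t ht2).ne'
    have h := (((hasDerivAt_phi t).mul ((hp t).div (hq t) hqne))).neg
    have e1 : phi t * (1 + c / q t ^ 2)
        = -(-t * phi t * (p t / q t) + phi t * ((p' t * q t - p t * q' t) / q t ^ 2)) := by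
      have hq2 : q t ^ 2 ≠ 0 := pow_ne_zero 2 hqne
      field_simp
      linear_combination (-(phi t)) * hkey t
    rw [e1]
    exact h
  have hlim : Tendsto (fun t => -(phi t * (p t / q t))) atTop (𝓝 0) := by
    have hb : ∀ᶠ t in atTop, |-(phi t * (p t / q t))| ≤ phi t := by
      filter_upwards [eventually_ge_atTop (2:ℝ)] with t ht
      have hqt := hqpos t ht
      obtain ⟨hp0, hpq⟩ := hbound t ht
      have hrat : 0 ≤ p t / q t := div_nonneg hp0 hqt.le
      have hrat1 : p t / q t ≤ 1 := (div_le_one hqt).2 hpq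
      rw [abs_neg, abs_of_nonneg (mul_nonneg (phi_pos t).le hrat)]
      calc phi t * (p t / q t) ≤ phi t * 1 := mul_le_mul_of_nonneg_left hrat1 (phi_pos t).le
        _ = phi t := mul_one _
    have h0 : Tendsto (fun t:ℝ => |phi t|) atTop (𝓝 0) := by
      simpa using tendsto_phi.abs
    apply squeeze_zero_norm' _ tendsto_phi
    filter_upwards [hb] with t ht using ht
  rw [integral_Ioi_of_hasDerivAt_of_tendsto' hderiv
      (aux_integrable c q hqc hqpos hc x hx) hlim]
  ring

end FTC

/-- Lower tail bound: `phi x * (p₅ x / q₅ x) ≤ ∫ t in Ioi x, phi t` for `x ≥ 2`. -/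
lemma tail_lb (x : ℝ) (hx : 2 ≤ x) :
    phi x * ((x^5 + 14*x^3 + 33*x) / (x^6 + 15*x^4 + 45*x^2 + 15)) ≤ ∫ t in Ioi x, phi t := by
  have hqpos : ∀ t : ℝ, 2 ≤ t → 0 < t^6 + 15*t^4 + 45*t^2 + 15 := by
    intro t ht; positivity
  have hc : ∀ t : ℝ, 2 ≤ t → |(-720 : ℝ)| ≤ (t^6 + 15*t^4 + 45*t^2 + 15) ^ 2 := by
    intro t ht
    have h4 : (4:ℝ) ≤ t^2 := by nlinarith
    have h27 : (27:ℝ) ≤ t^6 + 15*t^4 + 45*t^2 + 15 := by nlinarith [sq_nonneg (t^3), sq_nonneg (t^2)]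
    rw [abs_of_nonpos (by norm_num)]
    nlinarith [h27]
  have heq := aux_integral (-720) (fun t => t^5 + 14*t^3 + 33*t)
    (fun t => t^6 + 15*t^4 + 45*t^2 + 15)
    (fun t => 5*t^4 + 42*t^2 + 33) (fun t => 6*t^5 + 60*t^3 + 90*t)
    (fun t => by
      have : HasDerivAt (fun t : ℝ => t^5 + 14*t^3 + 33*t) (5*t^4 + 14*(3*t^2) + 33) t := by
        apply HasDerivAt.add
        apply HasDerivAt.add
        · simpa using hasDerivAt_pow 5 t
        · simpa using (hasDerivAt_pow 3 t).const_mul 14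
        · simpa using (hasDerivAt_id t).const_mul 33
      convert this using 1; ring)
    (fun t => by
      have : HasDerivAt (fun t : ℝ => t^6 + 15*t^4 + 45*t^2 + 15)
          (6*t^5 + 15*(4*t^3) + 45*(2*t) + 0) t := by
        apply HasDerivAt.add
        apply HasDerivAt.add
        apply HasDerivAt.add
        · simpa using hasDerivAt_pow 6 t
        · simpa using (hasDerivAt_pow 4 t).const_mul 15
        · simpa using (hasDerivAt_pow 2 t).const_mul 45
        · exact hasDerivAt_const t 15
      convert this using 1; ring)
    hqpos hc
    (fun t => by ring)
    (fun t ht => by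
      have h2 : (0:ℝ) < t := lt_of_lt_of_le two_pos ht
      constructor
      · show (0:ℝ) ≤ t^5 + 14*t^3 + 33*t
        positivity
      · show t^5 + 14*t^3 + 33*t ≤ t^6 + 15*t^4 + 45*t^2 + 15
        nlinarith [mul_nonneg (pow_nonneg h2.le 5) (by linarith : (0:ℝ) ≤ t-1),
          mul_nonneg (pow_nonneg h2.le 3) (by linarith : (0:ℝ) ≤ 15*t-14),
          mul_nonneg h2.le (by linarith : (0:ℝ) ≤ 15*t-11)])
    x hx
  rw [← heq]
  apply setIntegral_mono_on (aux_integrable (-720) _ (by continuity) hqpos hc x hx)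
    integrable_phi.integrableOn measurableSet_Ioi
  intro t ht
  have ht2 : (2:ℝ) ≤ t := le_trans hx (le_of_lt ht)
  have hq := hqpos t ht2
  have hfac : 1 + (-720:ℝ) / (t^6 + 15*t^4 + 45*t^2 + 15)^2 ≤ 1 := by
    have : (0:ℝ) ≤ 720 / (t^6 + 15*t^4 + 45*t^2 + 15)^2 := by positivity
    have h720 : (-720:ℝ) / (t^6 + 15*t^4 + 45*t^2 + 15)^2
        = -(720 / (t^6 + 15*t^4 + 45*t^2 + 15)^2) := by ring
    rw [h720]; linarith
  calc phi t * (1 + (-720:ℝ) / (t^6 + 15*t^4 + 45*t^2 + 15)^2) ≤ phi t * 1 :=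
        mul_le_mul_of_nonneg_left hfac (phi_pos t).le
    _ = phi t := mul_one _

/-- Upper tail bound: `∫ t in Ioi x, phi t ≤ phi x * (p₄ x / q₄ x)` for `x ≥ 2`. -/
lemma tail_ub (x : ℝ) (hx : 2 ≤ x) :
    (∫ t in Ioi x, phi t) ≤ phi x * ((x^4 + 9*x^2 + 8) / (x^5 + 10*x^3 + 15*x)) := by
  have hqpos : ∀ t : ℝ, 2 ≤ t → 0 < t^5 + 10*t^3 + 15*t := by
    intro t ht
    have h2 : (0:ℝ) < t := lt_of_lt_of_le two_pos ht
    positivity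
  have hc : ∀ t : ℝ, 2 ≤ t → |(120 : ℝ)| ≤ (t^5 + 10*t^3 + 15*t) ^ 2 := by
    intro t ht
    have h2 : (0:ℝ) < t := lt_of_lt_of_le two_pos ht
    have h4 : (4:ℝ) ≤ t^2 := by nlinarith
    have h27 : (27:ℝ) ≤ t^5 + 10*t^3 + 15*t := by
      nlinarith [mul_nonneg (mul_nonneg h2.le h2.le) (sq_nonneg t), mul_pos h2 h2]
    rw [abs_of_nonneg (by norm_num)]
    nlinarith [h27]
  have heq := aux_integral 120 (fun t => t^4 + 9*t^2 + 8)
    (fun t => t^5 + 10*t^3 + 15*t)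
    (fun t => 4*t^3 + 18*t) (fun t => 5*t^4 + 30*t^2 + 15)
    (fun t => by
      have : HasDerivAt (fun t : ℝ => t^4 + 9*t^2 + 8) (4*t^3 + 9*(2*t) + 0) t := by
        apply HasDerivAt.add
        apply HasDerivAt.add
        · simpa using hasDerivAt_pow 4 t
        · simpa using (hasDerivAt_pow 2 t).const_mul 9
        · exact hasDerivAt_const t 8
      convert this using 1; ring)
    (fun t => by
      have : HasDerivAt (fun t : ℝ => t^5 + 10*t^3 + 15*t) (5*t^4 + 10*(3*t^2) + 15) t := by
        apply HasDerivAt.add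
        apply HasDerivAt.add
        · simpa using hasDerivAt_pow 5 t
        · simpa using (hasDerivAt_pow 3 t).const_mul 10
        · simpa using (hasDerivAt_id t).const_mul 15
      convert this using 1; ring)
    hqpos hc
    (fun t => by ring)
    (fun t ht => by
      have h2 : (0:ℝ) < t := lt_of_lt_of_le two_pos ht
      constructor
      · show (0:ℝ) ≤ t^4 + 9*t^2 + 8
        positivity
      · show t^4 + 9*t^2 + 8 ≤ t^5 + 10*t^3 + 15*t
        nlinarith [mul_nonneg (pow_nonneg h2.le 4) (by linarith : (0:ℝ) ≤ t-1),
          mul_nonneg (sq_nonneg t) (by linarith : (0:ℝ) ≤ 10*t-9),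
          (by linarith : (8:ℝ) ≤ 15*t)])
    x hx
  rw [← heq]
  apply setIntegral_mono_on integrable_phi.integrableOn
    (aux_integrable 120 _ (by continuity) hqpos hc x hx) measurableSet_Ioi
  intro t ht
  have ht2 : (2:ℝ) ≤ t := le_trans hx (le_of_lt ht)
  have hq := hqpos t ht2
  have hfac : (1:ℝ) ≤ 1 + (120:ℝ) / (t^5 + 10*t^3 + 15*t)^2 := by
    have : (0:ℝ) ≤ 120 / (t^5 + 10*t^3 + 15*t)^2 := by positivity
    linarith
  calc phi t = phi t * 1 := (mul_one _).symm
    _ ≤ phi t * (1 + (120:ℝ) / (t^5 + 10*t^3 + 15*t)^2) :=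
        mul_le_mul_of_nonneg_left hfac (phi_pos t).le

/-- Padé lower bound for the logarithm: `3(y²−1)/(y²+4y+1) ≤ log y` for `y ≥ 1`. -/
lemma log_pade {y : ℝ} (hy : 1 ≤ y) : 3*(y^2-1)/(y^2+4*y+1) ≤ Real.log y := by
  set f : ℝ → ℝ := fun y => Real.log y - 3*(y^2-1)/(y^2+4*y+1) with hf
  have hD : ∀ z : ℝ, 1 ≤ z → (0:ℝ) < z^2+4*z+1 := fun z hz => by nlinarith
  have hderiv : ∀ z : ℝ, 1 ≤ z → HasDerivAt f
      (z⁻¹ - (3*(2*z)*(z^2+4*z+1) - 3*(z^2-1)*(2*z+4))/(z^2+4*z+1)^2) z := by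
    intro z hz
    have hz0 : (0:ℝ) < z := lt_of_lt_of_le one_pos hz
    have h1 : HasDerivAt Real.log z⁻¹ z := Real.hasDerivAt_log hz0.ne'
    have hnum : HasDerivAt (fun z : ℝ => 3*(z^2-1)) (3*(2*z)) z := by
      simpa using ((hasDerivAt_pow 2 z).sub_const 1).const_mul 3
    have hden : HasDerivAt (fun z : ℝ => z^2+4*z+1) (2*z + 4) z := by
      have : HasDerivAt (fun z : ℝ => z^2+4*z+1) (2*z + 4*1 + 0) z := by
        apply HasDerivAt.add
        apply HasDerivAt.add
        · simpa using hasDerivAt_pow 2 z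
        · simpa using (hasDerivAt_id z).const_mul 4
        · exact hasDerivAt_const z 1
      simpa using this
    have h2 := hnum.div hden (hD z hz).ne'
    exact h1.sub h2
  have hmono : MonotoneOn f (Ici 1) := by
    apply monotoneOn_of_deriv_nonneg (convex_Ici 1)
    · apply ContinuousOn.sub
      · apply Real.continuousOn_log.mono
        intro z hz
        simp only [mem_Ici] at hz
        simp only [mem_compl_iff, mem_singleton_iff]
        intro h; rw [h] at hz; linarith
      · apply ContinuousOn.div
        · fun_prop
        · fun_prop
        · intro z hz; exact (hD z hz).ne'
    · intro z hz
      rw [interior_Ici] at hz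
      exact ((hderiv z (le_of_lt hz)).differentiableAt).differentiableWithinAt
    · intro z hz
      rw [interior_Ici] at hz
      have hz1 : (1:ℝ) ≤ z := le_of_lt hz
      rw [(hderiv z hz1).deriv]
      have hz0 : (0:ℝ) < z := lt_of_lt_of_le one_pos hz1
      have hDz := hD z hz1
      rw [sub_nonneg, div_le_iff₀ (by positivity), inv_mul_eq_div, le_div_iff₀ hz0]
      nlinarith [pow_nonneg (by linarith : (0:ℝ) ≤ z - 1) 4]
  have h1 : f 1 ≤ f y := hmono (by simp) (by simpa using hy) hy
  have hf1 : f 1 = 0 := by simp [hf]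
  rw [hf1] at h1
  simp only [hf] at h1
  linarith

/-- The core polynomial inequality. -/
lemma core_poly (x : ℝ) (hx : 2 ≤ x) :
    ((x^6 + 15*x^4 + 45*x^2 + 15)^2 - x^2*(x^5 + 14*x^3 + 33*x)^2)
      * ((x^5 + 10*x^3 + 15*x)^2 + 4*(x^4 + 9*x^2 + 8)*(x^5 + 10*x^3 + 15*x)
        + (x^4 + 9*x^2 + 8)^2)
    ≤ 6*((x^5 + 10*x^3 + 15*x)^2 - (x^4 + 9*x^2 + 8)^2) * (x^5 + 14*x^3 + 33*x)^2 := by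
  have hu : (0:ℝ) ≤ x - 2 := by linarith
  have key : 6*((x^5 + 10*x^3 + 15*x)^2 - (x^4 + 9*x^2 + 8)^2) * (x^5 + 14*x^3 + 33*x)^2
      - ((x^6 + 15*x^4 + 45*x^2 + 15)^2 - x^2*(x^5 + 14*x^3 + 33*x)^2)
      * ((x^5 + 10*x^3 + 15*x)^2 + 4*(x^4 + 9*x^2 + 8)*(x^5 + 10*x^3 + 15*x)
        + (x^4 + 9*x^2 + 8)^2)
      = 183302156 + 2477001132*(x-2) + 10383617967*(x-2)^2 + 24199949596*(x-2)^3
        + 37874558755*(x-2)^4 + 43604897868*(x-2)^5 + 38912323110*(x-2)^6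
        + 27814785172*(x-2)^7 + 16273664885*(x-2)^8 + 7905456196*(x-2)^9
        + 3217570994*(x-2)^10 + 1102541244*(x-2)^11 + 318425745*(x-2)^12
        + 77306820*(x-2)^13 + 15668398*(x-2)^14 + 2618620*(x-2)^15 + 353703*(x-2)^16
        + 37376*(x-2)^17 + 2923*(x-2)^18 + 152*(x-2)^19 + 4*(x-2)^20 := by
    ring
  nlinarith [pow_nonneg hu 2, pow_nonneg hu 3, pow_nonneg hu 4, pow_nonneg hu 5,
    pow_nonneg hu 6, pow_nonneg hu 7, pow_nonneg hu 8, pow_nonneg hu 9, pow_nonneg hu 10,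
    pow_nonneg hu 11, pow_nonneg hu 12, pow_nonneg hu 13, pow_nonneg hu 14, pow_nonneg hu 15,
    pow_nonneg hu 16, pow_nonneg hu 17, pow_nonneg hu 18, pow_nonneg hu 19, pow_nonneg hu 20,
    key, hu]

end GaussTailAux


set_option maxHeartbeats 1000000 in
open GaussTailAux in
/-- For `x ≥ 2`, with `V = −2 log(1 − Φ(x)) − log(2π)`, one has `V − log V ≤ x²`. -/
theorem gaussian_V_lower (x : ℝ) (hx : 2 ≤ x)
    (V : ℝ) (hV : V = -2 * Real.log (1 - stdGaussianCDF x) - Real.log (2 * Real.pi)) :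
    V - Real.log V ≤ x ^ 2 := by
  have hx0 : (0:ℝ) < x := by linarith
  have hQ : 1 - stdGaussianCDF x = ∫ t in Set.Ioi x, phi t := tail_eq x
  set p4 : ℝ := x^4 + 9*x^2 + 8 with hp4
  set q4 : ℝ := x^5 + 10*x^3 + 15*x with hq4
  set p5 : ℝ := x^5 + 14*x^3 + 33*x with hp5
  set q5 : ℝ := x^6 + 15*x^4 + 45*x^2 + 15 with hq5
  clear_value p4 q4 p5 q5
  have hp4pos : 0 < p4 := by rw [hp4]; positivity
  have hq4pos : 0 < q4 := by
    rw [hq4]; nlinarith [pow_pos hx0 5, pow_pos hx0 3, hx0]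
  have hp5pos : 0 < p5 := by
    rw [hp5]; nlinarith [pow_pos hx0 5, pow_pos hx0 3, hx0]
  have hq5pos : 0 < q5 := by rw [hq5]; positivity
  have hub : 1 - stdGaussianCDF x ≤ phi x * (p4 / q4) := by
    rw [hQ, hp4, hq4]; exact tail_ub x hx
  have hlb : phi x * (p5 / q5) ≤ 1 - stdGaussianCDF x := by
    rw [hQ, hp5, hq5]; exact tail_lb x hx
  have hQpos : 0 < 1 - stdGaussianCDF x :=
    lt_of_lt_of_le (mul_pos (phi_pos x) (div_pos hp5pos hq5pos)) hlb
  have hphix : Real.log (phi x) = -(Real.log (2*π))/2 - x^2/2 := by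
    have hs : (0:ℝ) < Real.sqrt (2*π) := Real.sqrt_pos.2 (by positivity)
    rw [phi, Real.log_mul (by positivity) (Real.exp_ne_zero _), Real.log_inv,
      Real.log_exp, Real.log_sqrt (by positivity)]
    ring
  have hp4q4 : p4 ≤ q4 := by
    rw [hp4, hq4]
    nlinarith [mul_nonneg (pow_nonneg hx0.le 4) (by linarith : (0:ℝ) ≤ x-1),
      mul_nonneg (sq_nonneg x) (by linarith : (0:ℝ) ≤ 10*x-9),
      (by linarith : (8:ℝ) ≤ 15*x)]
  have h1 : x^2 + 2*(Real.log q4 - Real.log p4) ≤ V := by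
    have e4 : Real.log (phi x * (p4/q4)) = Real.log (phi x) + Real.log p4 - Real.log q4 := by
      rw [Real.log_mul (ne_of_gt (phi_pos x)) (ne_of_gt (div_pos hp4pos hq4pos)),
        Real.log_div (ne_of_gt hp4pos) (ne_of_gt hq4pos)]
      ring
    have hlog : Real.log (1 - stdGaussianCDF x)
        ≤ Real.log (phi x) + Real.log p4 - Real.log q4 := by
      rw [← e4]; exact Real.log_le_log hQpos hub
    rw [hV]
    linarith only [hlog, hphix]
  have h2 : V ≤ x^2 + 2*(Real.log q5 - Real.log p5) := by
    have e4 : Real.log (phi x * (p5/q5)) = Real.log (phi x) + Real.log p5 - Real.log q5 := by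
      rw [Real.log_mul (ne_of_gt (phi_pos x)) (ne_of_gt (div_pos hp5pos hq5pos)),
        Real.log_div (ne_of_gt hp5pos) (ne_of_gt hq5pos)]
      ring
    have hlog : Real.log (phi x) + Real.log p5 - Real.log q5
        ≤ Real.log (1 - stdGaussianCDF x) := by
      rw [← e4]
      exact Real.log_le_log (mul_pos (phi_pos x) (div_pos hp5pos hq5pos)) hlb
    rw [hV]
    linarith only [hlog, hphix]
  -- Padé bound applied to y = q4/p4
  have hy1 : 1 ≤ q4/p4 := (one_le_div hp4pos).2 hp4q4
  have hpade := log_pade hy1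
  have e5 : Real.log (q4/p4) = Real.log q4 - Real.log p4 :=
    Real.log_div (ne_of_gt hq4pos) (ne_of_gt hp4pos)
  have hden : (0:ℝ) < q4^2 + 4*p4*q4 + p4^2 := by
    nlinarith [mul_pos hp4pos hq4pos, sq_nonneg q4, sq_nonneg p4]
  have hyfrac : 3*((q4/p4)^2-1)/((q4/p4)^2+4*(q4/p4)+1)
      = 3*(q4^2-p4^2)/(q4^2+4*p4*q4+p4^2) := by
    have h0 : (0:ℝ) < (q4/p4)^2+4*(q4/p4)+1 := by positivity
    rw [div_eq_div_iff (ne_of_gt h0) (ne_of_gt hden)]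
    field_simp
  have hL4 : 0 ≤ Real.log q4 - Real.log p4 := by
    rw [← e5]
    exact Real.log_nonneg hy1
  -- core inequality
  have hcp := core_poly x hx
  rw [← hp4, ← hq4, ← hp5, ← hq5] at hcp
  have hcore : q5^2/p5^2 ≤ x^2 + 6*(q4^2-p4^2)/(q4^2+4*p4*q4+p4^2) := by
    have eL : q5^2/p5^2 - x^2 = (q5^2 - x^2*p5^2)/p5^2 := by
      field_simp
    have hfrac : (q5^2 - x^2*p5^2)/p5^2 ≤ 6*(q4^2-p4^2)/(q4^2+4*p4*q4+p4^2) := by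
      rw [div_le_div_iff₀ (pow_pos hp5pos 2) hden]
      linarith only [hcp]
    linarith only [eL, hfrac]
  have hfin1 : q5^2/p5^2 ≤ x^2 + 2*(Real.log q4 - Real.log p4) := by
    rw [hyfrac, e5] at hpade
    have hpade6 : 6*(q4^2-p4^2)/(q4^2+4*p4*q4+p4^2) ≤ 2*(Real.log q4 - Real.log p4) := by
      rw [show (6:ℝ)*(q4^2-p4^2) = 2*(3*(q4^2-p4^2)) from by ring, mul_div_assoc]
      linarith only [hpade]
    linarith only [hcore, hpade6]
  have hx2 : (4:ℝ) ≤ x^2 := by nlinarith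
  have hposA : (0:ℝ) < x^2 + 2*(Real.log q4 - Real.log p4) := by linarith
  have hlogV : Real.log (x^2 + 2*(Real.log q4 - Real.log p4)) ≤ Real.log V :=
    Real.log_le_log hposA h1
  have h2' : 2*(Real.log q5 - Real.log p5)
      ≤ Real.log (x^2 + 2*(Real.log q4 - Real.log p4)) := by
    have e6 : 2*(Real.log q5 - Real.log p5) = Real.log (q5^2/p5^2) := by
      rw [Real.log_div (pow_ne_zero 2 (ne_of_gt hq5pos))
        (pow_ne_zero 2 (ne_of_gt hp5pos)), Real.log_pow, Real.log_pow]
      push_cast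
      ring
    rw [e6]
    exact Real.log_le_log (by positivity) hfin1
  linarith only [h2, h2', hlogV]
end

section
/- For a real number x, let V = V(x) = −2 log(1 − Φ(x)) − log(2π). Then for every x ≥ 1, x² ≤ V − log V + (log V)/V. -/
open ProbabilityTheory Real

open MeasureTheory Filter


noncomputable def npdf (t : ℝ) : ℝ := (Real.sqrt (2 * Real.pi))⁻¹ * Real.exp (-t ^ 2 / 2)

lemma npdf_pos (t : ℝ) : 0 < npdf t := by unfold npdf; positivity

lemma integrable_npdf : Integrable npdf := by
  have h := (integrable_exp_neg_mul_sq (b := (1:ℝ)/2) (by norm_num)).const_mul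
    (Real.sqrt (2 * Real.pi))⁻¹
  refine h.congr ?_
  filter_upwards with t
  unfold npdf; ring_nf

lemma hasDerivAt_npdf (t : ℝ) : HasDerivAt npdf (-t * npdf t) t := by
  have h1 : HasDerivAt (fun t : ℝ => -t ^ 2 / 2) (-t) t := by
    have := ((hasDerivAt_pow 2 t).neg.div_const 2)
    simpa using this.congr_deriv (by push_cast; ring)
  have h2 := (h1.exp).const_mul (Real.sqrt (2 * Real.pi))⁻¹
  unfold npdf
  refine h2.congr_deriv ?_
  ring

lemma tendsto_npdf : Tendsto npdf atTop (nhds 0) := by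
  have h1 : Tendsto (fun t : ℝ => -t ^ 2 / 2) atTop atBot := by
    apply Tendsto.atBot_div_const (by norm_num)
    exact tendsto_neg_atBot_iff.mpr (tendsto_pow_atTop (by norm_num))
  have h2 := (Real.tendsto_exp_atBot).comp h1
  have h3 := h2.const_mul (Real.sqrt (2 * Real.pi))⁻¹
  have : (Real.sqrt (2 * Real.pi))⁻¹ * 0 = 0 := by ring
  rw [this] at h3
  exact h3

noncomputable def gfun (t : ℝ) : ℝ := npdf t * ((t ^ 2 + 2) / (t ^ 3 + 3 * t))

noncomputable def gfun' (t : ℝ) : ℝ :=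
  -(npdf t * ((t ^ 6 + 6 * t ^ 4 + 9 * t ^ 2 + 6) / (t ^ 3 + 3 * t) ^ 2))

lemma hasDerivAt_gfun {t : ℝ} (ht : 0 < t) : HasDerivAt gfun (gfun' t) t := by
  have hd : t ^ 3 + 3 * t ≠ 0 := by positivity
  have h1 : HasDerivAt (fun t : ℝ => (t ^ 2 + 2) / (t ^ 3 + 3 * t))
      ((2 * t * (t ^ 3 + 3 * t) - (t ^ 2 + 2) * (3 * t ^ 2 + 3)) / (t ^ 3 + 3 * t) ^ 2) t := by
    have hn : HasDerivAt (fun t : ℝ => t ^ 2 + 2) (2 * t) t := by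
      simpa using (hasDerivAt_pow 2 t).add_const 2
    have hdd : HasDerivAt (fun t : ℝ => t ^ 3 + 3 * t) (3 * t ^ 2 + 3) t := by
      have := (hasDerivAt_pow 3 t).add ((hasDerivAt_id t).const_mul 3)
      exact this.congr_deriv (by ring)
    exact hn.div hdd hd
  have h2 := (hasDerivAt_npdf t).mul h1
  unfold gfun gfun'
  refine h2.congr_deriv ?_
  field_simp
  ring

lemma gfun_ratio_le {t : ℝ} (ht : 1 ≤ t) :
    (t ^ 6 + 6 * t ^ 4 + 9 * t ^ 2 + 6) / (t ^ 3 + 3 * t) ^ 2 ≤ 2 := by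
  rw [div_le_iff₀ (by positivity)]
  nlinarith [sq_nonneg t, sq_nonneg (t-1), pow_le_pow_left₀ (by norm_num : (0:ℝ) ≤ 1) ht 6]

lemma gfun_ratio_ge {t : ℝ} (ht : 0 < t) :
    1 ≤ (t ^ 6 + 6 * t ^ 4 + 9 * t ^ 2 + 6) / (t ^ 3 + 3 * t) ^ 2 := by
  rw [le_div_iff₀ (by positivity)]
  nlinarith

lemma integrableOn_gfun' {x : ℝ} (hx : 1 ≤ x) : IntegrableOn gfun' (Set.Ioi x) := by
  refine Integrable.mono' ((integrable_npdf.const_mul 2).integrableOn) ?_ ?_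
  · refine ContinuousOn.aestronglyMeasurable ?_ measurableSet_Ioi
    have hc : ContinuousOn npdf (Set.Ioi x) := by
      unfold npdf; fun_prop
    unfold gfun'
    refine (hc.mul (ContinuousOn.div (by fun_prop) (by fun_prop) ?_)).neg
    intro t ht
    have ht1 : (1:ℝ) < t := lt_of_le_of_lt hx ht
    positivity
  · filter_upwards [ae_restrict_mem measurableSet_Ioi] with t ht
    have ht1 : (1:ℝ) ≤ t := le_of_lt (lt_of_le_of_lt hx ht)
    have h1 := gfun_ratio_le ht1
    have h2 := gfun_ratio_ge (lt_of_lt_of_le one_pos ht1)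
    have hnp := (npdf_pos t).le
    unfold gfun'
    rw [norm_neg, Real.norm_of_nonneg (by positivity)]
    calc npdf t * ((t ^ 6 + 6 * t ^ 4 + 9 * t ^ 2 + 6) / (t ^ 3 + 3 * t) ^ 2)
        ≤ npdf t * 2 := by apply mul_le_mul_of_nonneg_left h1 hnp
      _ = 2 * npdf t := by ring

lemma tendsto_gfun : Filter.Tendsto gfun Filter.atTop (nhds 0) := by
  refine squeeze_zero' ?_ ?_ tendsto_npdf
  · filter_upwards [Filter.eventually_ge_atTop (1:ℝ)] with t ht
    have : (0:ℝ) < t := lt_of_lt_of_le one_pos ht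
    unfold gfun
    have := (npdf_pos t).le
    positivity
  · filter_upwards [Filter.eventually_ge_atTop (1:ℝ)] with t ht
    unfold gfun
    have h1 : (t ^ 2 + 2) / (t ^ 3 + 3 * t) ≤ 1 := by
      rw [div_le_one (by positivity)]
      nlinarith
    nth_rewrite 2 [← mul_one (npdf t)]
    exact mul_le_mul_of_nonneg_left h1 (npdf_pos t).le

lemma tail_le {x : ℝ} (hx : 1 ≤ x) : ∫ t in Set.Ioi x, npdf t ≤ gfun x := by
  have hx0 : (0:ℝ) < x := lt_of_lt_of_le one_pos hx
  have hint : ∫ t in Set.Ioi x, gfun' t = 0 - gfun x := by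
    refine integral_Ioi_of_hasDerivAt_of_tendsto ?_ ?_ (integrableOn_gfun' hx) tendsto_gfun
    · exact (hasDerivAt_gfun hx0).continuousAt.continuousWithinAt
    · intro t ht
      exact hasDerivAt_gfun (lt_trans hx0 ht)
  have hmono : ∫ t in Set.Ioi x, npdf t ≤ ∫ t in Set.Ioi x, -gfun' t := by
    refine setIntegral_mono_on integrable_npdf.integrableOn
      (integrableOn_gfun' hx).neg measurableSet_Ioi ?_
    intro t ht
    have ht1 : (1:ℝ) ≤ t := le_of_lt (lt_of_le_of_lt hx ht)
    have h2 := gfun_ratio_ge (lt_of_lt_of_le one_pos ht1)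
    unfold gfun'
    rw [neg_neg]
    nth_rewrite 1 [← mul_one (npdf t)]
    exact mul_le_mul_of_nonneg_left h2 (npdf_pos t).le
  rw [MeasureTheory.integral_neg, hint] at hmono
  linarith

open ProbabilityTheory in
lemma npdf_eq : gaussianPDFReal 0 1 = npdf := by
  ext t
  unfold gaussianPDFReal npdf
  norm_num

open ProbabilityTheory in
lemma one_sub_cdf (x : ℝ) : 1 - stdGaussianCDF x = ∫ t in Set.Ioi x, npdf t := by
  have h1 : stdGaussianCDF x = ∫ t in Set.Iic x, npdf t := by
    unfold stdGaussianCDF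
    rw [gaussianReal_apply_eq_integral 0 one_ne_zero, ENNReal.toReal_ofReal]
    · rw [npdf_eq]
    · rw [npdf_eq]
      exact setIntegral_nonneg measurableSet_Iic (fun t _ => (npdf_pos t).le)
  have h2 : (∫ t in Set.Iic x, npdf t) + ∫ t in Set.Ioi x, npdf t = 1 := by
    rw [intervalIntegral.integral_Iic_add_Ioi integrable_npdf.integrableOn
      integrable_npdf.integrableOn, ← npdf_eq, integral_gaussianPDFReal_eq_one 0 one_ne_zero]
  rw [h1]; linarith

lemma log_le_sqrt {a : ℝ} (ha : 1 ≤ a) : Real.log a ≤ Real.sqrt a := by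
  have ha0 : (0:ℝ) ≤ a := by linarith
  set b := Real.sqrt (Real.sqrt a) with hb
  have hb0 : 0 ≤ Real.sqrt a := Real.sqrt_nonneg a
  have hb2 : b ^ 2 = Real.sqrt a := Real.sq_sqrt hb0
  have hb1 : 1 ≤ b := by
    rw [hb]
    rw [show (1:ℝ) = Real.sqrt (Real.sqrt 1) by simp]
    exact Real.sqrt_le_sqrt (Real.sqrt_le_sqrt ha)
  have hlog : Real.log a = 4 * Real.log b := by
    rw [hb, Real.log_sqrt hb0, Real.log_sqrt ha0]
    ring
  have h1 : Real.log b ≤ b - 1 := Real.log_le_sub_one_of_pos (by linarith)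
  have h2 : 4 * (b - 1) ≤ b ^ 2 := by nlinarith [sq_nonneg (b - 2)]
  rw [hlog, ← hb2]
  linarith

lemma log_le_two_sqrt_sub {a : ℝ} (ha : 1 ≤ a) :
    Real.log a ≤ 2 * (Real.sqrt a - 1) := by
  have ha0 : (0:ℝ) ≤ a := by linarith
  have h1 : 1 ≤ Real.sqrt a := by
    rw [show (1:ℝ) = Real.sqrt 1 by simp]; exact Real.sqrt_le_sqrt ha
  have hlog : Real.log a = 2 * Real.log (Real.sqrt a) := by
    rw [Real.log_sqrt ha0]; ring
  have := Real.log_le_sub_one_of_pos (show (0:ℝ) < Real.sqrt a by linarith)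
  rw [hlog]; linarith

lemma keyB {a ℓ c : ℝ} (ha : 1 ≤ a) (hℓ : ℓ = Real.log a)
    (hc1 : 2 / (a + 3) ≤ c) (hc2 : c ≤ 2 / (a + 2)) :
    a * ℓ * ((a + (ℓ + c)) - 1) ≤ (ℓ + c) * ((a - 1) * (a + (ℓ + c)) + 1) := by
  have ha3 : (0:ℝ) < a + 3 := by linarith
  have ha2 : (0:ℝ) < a + 2 := by linarith
  have hc0 : 0 < c := lt_of_lt_of_le (by positivity) hc1
  have hℓ0 : 0 ≤ ℓ := hℓ ▸ Real.log_nonneg ha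
  set W := a + (ℓ + c) with hWdef
  have hWa : a ≤ W := by simp [hWdef]; linarith
  have hinner : ℓ * (ℓ + c - 1) ≤ c * ((a - 1) * W + 1) := by
    set t := Real.sqrt a with htdef
    have ht2 : t ^ 2 = a := Real.sq_sqrt (by linarith)
    have ht1 : 1 ≤ t := by
      rw [htdef, show (1:ℝ) = Real.sqrt 1 by simp]; exact Real.sqrt_le_sqrt ha
    have hℓt : ℓ ≤ t := hℓ ▸ log_le_sqrt ha
    have hℓ2t : ℓ ≤ 2 * (t - 1) := hℓ ▸ log_le_two_sqrt_sub ha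
    have hLHSlb : 2 / (a + 3) * ((a - 1) * a + 1) ≤ c * ((a - 1) * W + 1) := by
      have h1 : (a - 1) * a + 1 ≤ (a - 1) * W + 1 := by nlinarith
      have h2 : (0:ℝ) ≤ (a - 1) * a + 1 := by nlinarith
      calc 2 / (a + 3) * ((a - 1) * a + 1) ≤ c * ((a - 1) * a + 1) :=
            mul_le_mul_of_nonneg_right hc1 h2
        _ ≤ c * ((a - 1) * W + 1) := mul_le_mul_of_nonneg_left h1 hc0.le
    rcases le_or_gt (ℓ + c - 1) 0 with hcase | hcase
    · have : ℓ * (ℓ + c - 1) ≤ 0 := mul_nonpos_of_nonneg_of_nonpos hℓ0 hcase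
      have h2 : (0:ℝ) ≤ c * ((a - 1) * W + 1) := by
        apply mul_nonneg hc0.le; nlinarith
      linarith
    · have hcb : c ≤ 2 / 3 := le_trans hc2 (by rw [div_le_div_iff₀ ha2 (by norm_num)]; linarith)
      rcases le_or_gt a 4 with hX | hX
      · -- 1 ≤ t ≤ 2
        have ht2' : t ≤ 2 := by nlinarith
        have hup : ℓ * (ℓ + c - 1) ≤ (2 * (t - 1)) * (2 * (t - 1) - 1 / 3) := by
          apply mul_le_mul hℓ2t (by linarith) hcase.le (by linarith)
        have hpoly : (2 * (t - 1)) * (2 * (t - 1) - 1 / 3) ≤ 2 / (a + 3) * ((a - 1) * a + 1) := by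
          rw [← ht2, div_mul_eq_mul_div, le_div_iff₀ (by positivity : (0:ℝ) < t ^ 2 + 3)]
          ring_nf
          nlinarith [mul_nonneg (mul_nonneg (sub_nonneg.2 ht1) (sub_nonneg.2 ht2')) (sub_nonneg.2 ht1),
            mul_nonneg (sub_nonneg.2 ht1) (sub_nonneg.2 ht2'), sq_nonneg (t - 1), sq_nonneg (t - 2),
            mul_nonneg (mul_nonneg (sub_nonneg.2 ht1) (sub_nonneg.2 ht1)) (sub_nonneg.2 ht2')]
        calc ℓ * (ℓ + c - 1) ≤ 2 / (a + 3) * ((a - 1) * a + 1) := le_trans hup hpoly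
          _ ≤ c * ((a - 1) * W + 1) := hLHSlb
      · -- t ≥ 2
        have ht2' : 2 ≤ t := by nlinarith
        have hc13 : c ≤ 1 / 3 := le_trans hc2 (by rw [div_le_div_iff₀ ha2 (by norm_num)]; linarith)
        have hup : ℓ * (ℓ + c - 1) ≤ t * (t - 1 / 3) := by
          apply mul_le_mul hℓt (by linarith) hcase.le (by linarith)
        have hpoly : t * (t - 1 / 3) ≤ 2 / (a + 3) * ((a - 1) * a + 1) := by
          rw [← ht2, div_mul_eq_mul_div, le_div_iff₀ (by positivity : (0:ℝ) < t ^ 2 + 3)]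
          ring_nf
          nlinarith [mul_nonneg (sub_nonneg.2 ht2') (sub_nonneg.2 ht2'),
            mul_nonneg (mul_nonneg (sub_nonneg.2 ht2') (sub_nonneg.2 ht2')) (sub_nonneg.2 ht2'),
            sq_nonneg (t - 2), mul_nonneg (sq_nonneg (t - 2)) (sub_nonneg.2 ht2')]
        calc ℓ * (ℓ + c - 1) ≤ 2 / (a + 3) * ((a - 1) * a + 1) := le_trans hup hpoly
          _ ≤ c * ((a - 1) * W + 1) := hLHSlb
  nlinarith [hinner]

lemma Gmono : MonotoneOn (fun v : ℝ => v - Real.log v + Real.log v / v) (Set.Ici 1) := by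
  have hderiv : ∀ v : ℝ, 1 < v → HasDerivAt (fun v : ℝ => v - Real.log v + Real.log v / v)
      (1 - v⁻¹ + (v⁻¹ * v - Real.log v * 1) / v ^ 2) v := by
    intro v hv
    have hv0 : v ≠ 0 := by positivity
    have h := ((hasDerivAt_id v).sub (Real.hasDerivAt_log hv0)).add
      ((Real.hasDerivAt_log hv0).div (hasDerivAt_id v) hv0)
    exact h
  apply monotoneOn_of_deriv_nonneg (convex_Ici 1)
  · apply ContinuousOn.add (ContinuousOn.sub (continuousOn_id) ?_) (ContinuousOn.div ?_ (continuousOn_id) ?_)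
    · exact Real.continuousOn_log.mono (fun v hv => by simp at hv ⊢; exact ne_of_gt (by linarith))
    · exact Real.continuousOn_log.mono (fun v hv => by simp at hv ⊢; exact ne_of_gt (by linarith))
    · intro v hv; simp at hv ⊢; exact ne_of_gt (by linarith)
  · intro v hv
    rw [interior_Ici, Set.mem_Ioi] at hv
    exact (hderiv v hv).differentiableAt.differentiableWithinAt
  · intro v hv
    rw [interior_Ici, Set.mem_Ioi] at hv
    rw [HasDerivAt.deriv (hderiv v hv)]
    have hlog : Real.log v ≤ v - 1 := Real.log_le_sub_one_of_pos (by linarith)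
    have hv0 : (0:ℝ) < v := by linarith
    have h1 : (0:ℝ) < v^2 := by positivity
    have key : 0 ≤ (v^2 - v + (1 - Real.log v)) / v^2 := by
      apply div_nonneg _ h1.le
      nlinarith
    have heq : 1 - v⁻¹ + (v⁻¹ * v - Real.log v * 1) / v ^ 2
        = (v^2 - v + (1 - Real.log v)) / v^2 := by
      field_simp
    rw [heq]
    exact key

/-- For `x ≥ 1`, with `V = −2 log(1 − Φ(x)) − log(2π)`, one has
`x² ≤ V − log V + (log V)/V`. -/
theorem gaussian_V_upper (x : ℝ) (hx : 1 ≤ x)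
    (V : ℝ) (hV : V = -2 * Real.log (1 - stdGaussianCDF x) - Real.log (2 * Real.pi)) :
    x ^ 2 ≤ V - Real.log V + Real.log V / V := by
  have hx0 : (0:ℝ) < x := lt_of_lt_of_le one_pos hx
  have hQ : 1 - stdGaussianCDF x = ∫ t in Set.Ioi x, npdf t := one_sub_cdf x
  have hQpos : 0 < 1 - stdGaussianCDF x := by
    rw [hQ]
    refine (setIntegral_pos_iff_support_of_nonneg_ae ?_ integrable_npdf.integrableOn).mpr ?_
    · filter_upwards with t using (npdf_pos t).le
    · have hsupp : Function.support npdf = Set.univ := by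
        ext t; simp [Function.mem_support, (npdf_pos t).ne']
      rw [hsupp, Set.univ_inter]
      simp [Real.volume_Ioi]
  have hQle : 1 - stdGaussianCDF x ≤ npdf x * ((x ^ 2 + 2) / (x ^ 3 + 3 * x)) := by
    rw [hQ]; exact tail_le hx
  set r : ℝ := (x ^ 3 + 3 * x) / (x ^ 2 + 2) with hrdef
  have hden : (0:ℝ) < x ^ 2 + 2 := by positivity
  have hnum : (0:ℝ) < x ^ 3 + 3 * x := by positivity
  have hr0 : 0 < r := by positivity
  have hr1 : 1 ≤ r := by
    rw [hrdef, le_div_iff₀ hden]; nlinarith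
  have hlogQ : Real.log (1 - stdGaussianCDF x) ≤ Real.log (npdf x) - Real.log r := by
    have h1 : npdf x * ((x ^ 2 + 2) / (x ^ 3 + 3 * x)) = npdf x * r⁻¹ := by
      rw [hrdef, inv_div]
    have h2 := Real.log_le_log hQpos (h1 ▸ hQle)
    rwa [Real.log_mul (npdf_pos x).ne' (by positivity), Real.log_inv,
      ← sub_eq_add_neg] at h2
  have hlognpdf : Real.log (npdf x) = -(Real.log (2 * Real.pi)) / 2 - x ^ 2 / 2 := by
    unfold npdf
    rw [Real.log_mul (by positivity) (Real.exp_ne_zero _), Real.log_inv,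
      Real.log_sqrt (by positivity), Real.log_exp]
    ring
  set a : ℝ := x ^ 2 with hadef
  have ha : 1 ≤ a := by nlinarith
  set ℓ : ℝ := Real.log a with hldef
  set c : ℝ := 2 * Real.log ((a + 3) / (a + 2)) with hcdef
  have hratio_pos : (0:ℝ) < (a + 3) / (a + 2) := by positivity
  have hs : 2 * Real.log r = ℓ + c := by
    have hre : r = x * ((x ^ 2 + 3) / (x ^ 2 + 2)) := by
      rw [hrdef]; field_simp; ring
    rw [hre, Real.log_mul hx0.ne' (by positivity), hldef, hadef,
      show Real.log (x ^ 2) = 2 * Real.log x by rw [Real.log_pow]; push_cast; ring, hcdef]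
    ring
  have hc2 : c ≤ 2 / (a + 2) := by
    have h := Real.log_le_sub_one_of_pos hratio_pos
    have : (a + 3) / (a + 2) - 1 = 1 / (a + 2) := by
      rw [div_sub_one (by positivity)]; ring_nf
    rw [hcdef]
    rw [this] at h
    rw [show (2:ℝ) / (a + 2) = 2 * (1 / (a + 2)) by ring]
    linarith
  have hc1 : 2 / (a + 3) ≤ c := by
    have h := Real.log_le_sub_one_of_pos (show (0:ℝ) < (a + 2) / (a + 3) by positivity)
    have heq : Real.log ((a + 2) / (a + 3)) = -Real.log ((a + 3) / (a + 2)) := by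
      rw [← Real.log_inv, inv_div]
    have h2 : (a + 2) / (a + 3) - 1 = -(1 / (a + 3)) := by field_simp; ring
    rw [heq, h2] at h
    rw [hcdef, show (2:ℝ) / (a + 3) = 2 * (1 / (a + 3)) by ring]
    linarith
  have hc0 : 0 < c := lt_of_lt_of_le (by positivity) hc1
  have hl0 : 0 ≤ ℓ := Real.log_nonneg ha
  set W : ℝ := a + (ℓ + c) with hWdef
  have hW1 : 1 ≤ W := by rw [hWdef]; linarith
  have hWpos : (0:ℝ) < W := by linarith
  have hVW : W ≤ V := by
    have := hlogQ
    rw [hlognpdf] at this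
    rw [hV, hWdef, ← hs, hadef]
    linarith
  have hV1 : 1 ≤ V := le_trans hW1 hVW
  clear_value W c ℓ a
  -- main inequality at W
  have hGW : a ≤ W - Real.log W + Real.log W / W := by
    have hu0 : 0 ≤ Real.log W := Real.log_nonneg hW1
    have ha0 : (0:ℝ) < a := by linarith
    have huB : Real.log W ≤ ℓ + (ℓ + c) / a := by
      have h1 : Real.log W - Real.log a = Real.log (W / a) := (Real.log_div hWpos.ne' ha0.ne').symm
      have h2 : Real.log (W / a) ≤ W / a - 1 := Real.log_le_sub_one_of_pos (by positivity)
      have h3 : W / a - 1 = (ℓ + c) / a := by rw [hWdef]; field_simp; ring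
      have h4 : Real.log W ≤ Real.log a + (ℓ + c) / a := by
        rw [h3] at h2; linarith
      rw [← hldef] at h4
      exact h4
    have hkey := keyB ha hldef hc1 hc2
    rw [← hWdef] at hkey
    have hfrac : 0 ≤ 1 - 1 / W := by
      have : 1 / W ≤ 1 := by rw [div_le_one hWpos]; exact hW1
      linarith
    have h1 : Real.log W * (1 - 1 / W) ≤ (ℓ + (ℓ + c) / a) * (1 - 1 / W) :=
      mul_le_mul_of_nonneg_right huB hfrac
    have h2 : (ℓ + (ℓ + c) / a) * (1 - 1 / W) ≤ ℓ + c := by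
      have heq : (ℓ + (ℓ + c) / a) * (1 - 1 / W) = (a * ℓ + (ℓ + c)) * (W - 1) / (a * W) := by
        have e1 : ℓ + (ℓ + c) / a = (a * ℓ + (ℓ + c)) / a := by field_simp
        have e2 : 1 - 1 / W = (W - 1) / W := by
          rw [sub_div, div_self hWpos.ne']
        rw [e1, e2, div_mul_div_comm]
      rw [heq, div_le_iff₀ (by positivity)]
      nlinarith [hkey]
    have h3 : Real.log W - Real.log W / W = Real.log W * (1 - 1 / W) := by ring
    have h5 : Real.log W - Real.log W / W ≤ ℓ + c := by rw [h3]; linarith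
    have h6 : a + (ℓ + c) ≤ W + (Real.log W / W - Real.log W) + (ℓ + c) := by linarith
    linarith [hWdef.ge, hWdef.le]
  have hGmono := Gmono (Set.mem_Ici.mpr hW1) (Set.mem_Ici.mpr hV1) hVW
  simp only at hGmono
  calc a ≤ W - Real.log W + Real.log W / W := hGW
    _ ≤ V - Real.log V + Real.log V / V := hGmono
end

section
/- For every real y ≥ 11, log(1 + (log y)/y) + 2 log(1 − 1/y) ≥ 0. -/
theorem log_ineq_ge_eleven (y : ℝ) (hy : 11 ≤ y) :
    0 ≤ Real.log (1 + Real.log y / y) + 2 * Real.log (1 - 1 / y) := by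
  have hy0 : (0:ℝ) < y := by linarith
  have hL : (231:ℝ)/100 ≤ Real.log y := by
    have h11 : Real.log 11 ≤ Real.log y := Real.log_le_log (by norm_num) hy
    have hexp : Real.exp (231/100) ≤ 11 := by
      have he : Real.exp 1 < 2.7182818286 := Real.exp_one_lt_d9
      have hfrac : Real.exp (31/100) ≤ 100/69 := by
        have h := Real.add_one_le_exp (-(31/100 : ℝ))
        have hpos : (0:ℝ) < Real.exp (31/100) := Real.exp_pos _
        rw [Real.exp_neg] at h
        rw [le_div_iff₀ (by norm_num)]
        nlinarith [mul_inv_cancel₀ (ne_of_gt hpos),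
          mul_le_mul_of_nonneg_left h hpos.le]
      have hsplit : Real.exp (231/100 : ℝ)
          = Real.exp 1 * Real.exp 1 * Real.exp (31/100) := by
        rw [← Real.exp_add, ← Real.exp_add]; norm_num
      have h1 : (0:ℝ) < Real.exp 1 := Real.exp_pos _
      have h2 : (0:ℝ) < Real.exp (31/100) := Real.exp_pos _
      rw [hsplit]
      nlinarith
    have := (Real.le_log_iff_exp_le (by norm_num : (0:ℝ) < 11)).mpr hexp
    linarith
  have hlogpos : 0 < Real.log y := by linarith
  have ha : 0 < 1 + Real.log y / y := by positivity
  have hb : 0 < 1 - 1 / y := by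
    rw [sub_pos, div_lt_one hy0]; linarith
  have hkey : 1 ≤ (1 + Real.log y / y) * (1 - 1 / y)^2 := by
    have h1 : 1 + Real.log y / y = (y + Real.log y) / y := by field_simp
    have h2 : 1 - 1 / y = (y - 1) / y := by field_simp
    rw [h1, h2, div_pow, div_mul_div_comm, le_div_iff₀ (by positivity)]
    have hfac : 0 ≤ (y - 11) * (31 * y - 21) := by nlinarith
    nlinarith [sq_nonneg (y - 1), mul_le_mul_of_nonneg_left hL (sq_nonneg (y-1))]
  have h2log : 2 * Real.log (1 - 1 / y) = Real.log ((1 - 1 / y)^2) := by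
    rw [Real.log_pow]; push_cast; ring
  rw [h2log, ← Real.log_mul (ne_of_gt ha) (by positivity)]
  exact Real.log_nonneg hkey
end

section
/- Let M_n be the maximum of n independent standard normal random variables, let N = log(n²/(2π)), and for 0 < α < 1 let L_α = −2 log(−log α). If N + L_α ≥ 6, then P( M_n ≥ (N + L_α − log(N + L_α))^{1/2} ) ≥ 1 − α. -/
open MeasureTheory ProbabilityTheory Real Filter

noncomputable def gTail (t : ℝ) : ℝ := ∫ x in Set.Ioi t, Real.exp (-x^2/2)

noncomputable def gMin (t : ℝ) : ℝ :=
  Real.exp (-t^2/2) * ((t^3 + 5*t)/(t^4 + 6*t^2 + 3))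

lemma den_pos (t : ℝ) : 0 < t^4 + 6*t^2 + 3 := by positivity

lemma hasDerivAt_gMin (t : ℝ) :
    HasDerivAt gMin (Real.exp (-t^2/2) * (24/(t^4 + 6*t^2 + 3)^2 - 1)) t := by
  have h1 : HasDerivAt (fun t : ℝ => -t^2/2) (-t) t := by
    have h := ((hasDerivAt_pow 2 t).neg).div_const 2
    refine h.congr_deriv ?_
    push_cast; ring
  have hexp : HasDerivAt (fun t : ℝ => Real.exp (-t^2/2)) (Real.exp (-t^2/2) * (-t)) t := h1.exp
  have hnum : HasDerivAt (fun t : ℝ => t^3 + 5*t) (3*t^2 + 5) t := by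
    have h := (hasDerivAt_pow 3 t).add ((hasDerivAt_id t).const_mul 5)
    refine h.congr_deriv ?_
    push_cast; ring
  have hden : HasDerivAt (fun t : ℝ => t^4 + 6*t^2 + 3) (4*t^3 + 12*t) t := by
    have h := ((hasDerivAt_pow 4 t).add ((hasDerivAt_pow 2 t).const_mul 6)).add_const 3
    refine h.congr_deriv ?_
    push_cast; ring
  have hr := hnum.div hden (den_pos t).ne'
  have h := hexp.mul hr
  refine h.congr_deriv ?_
  have hd := (den_pos t).ne'
  simp only [Pi.div_apply]
  field_simp
  ring

lemma integ_exp : Integrable (fun x : ℝ => Real.exp (-x^2/2)) := by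
  have h := integrable_exp_neg_mul_sq (show (0:ℝ) < 1/2 by norm_num)
  have e : (fun x : ℝ => Real.exp (-x^2/2)) = fun x : ℝ => Real.exp (-(1/2) * x^2) := by
    funext x; ring_nf
  rw [e]; exact h

lemma gTail_split {a b : ℝ} (hab : a ≤ b) :
    gTail a = (∫ x in a..b, Real.exp (-x^2/2)) + gTail b := by
  rw [intervalIntegral.integral_of_le hab, gTail, gTail,
    ← Set.Ioc_union_Ioi_eq_Ioi hab,
    setIntegral_union (Set.Ioc_disjoint_Ioi le_rfl) measurableSet_Ioi
      integ_exp.integrableOn integ_exp.integrableOn]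

lemma contH : Continuous (fun t : ℝ => Real.exp (-t^2/2) * (24/(t^4 + 6*t^2 + 3)^2 - 1)) := by
  apply Continuous.mul (by continuity)
  apply Continuous.sub _ continuous_const
  apply Continuous.div continuous_const (by continuity)
  intro x
  positivity

lemma gDiff_antitone {a b : ℝ} (hab : a ≤ b) :
    gTail b - gMin b ≤ gTail a - gMin a := by
  have hftc : gMin b - gMin a
      = ∫ x in a..b, Real.exp (-x^2/2) * (24/(x^4 + 6*x^2 + 3)^2 - 1) := by
    exact (intervalIntegral.integral_eq_sub_of_hasDerivAt
      (fun x _ => hasDerivAt_gMin x) (contH.intervalIntegrable a b)).symm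
  have hsplit := gTail_split hab
  have hmono : ∫ x in a..b, -(Real.exp (-x^2/2) * (24/(x^4 + 6*x^2 + 3)^2 - 1))
      ≤ ∫ x in a..b, Real.exp (-x^2/2) := by
    apply intervalIntegral.integral_mono_on hab (contH.neg.intervalIntegrable a b)
      (integ_exp.intervalIntegrable)
    intro x _
    have hd := den_pos x
    have h24 : 0 ≤ 24/(x^4 + 6*x^2 + 3)^2 := by positivity
    simp only [Pi.neg_apply]
    nlinarith [Real.exp_pos (-x^2/2)]
  rw [intervalIntegral.integral_neg] at hmono
  linarith

lemma gTail_tendsto : Tendsto gTail atTop (nhds 0) := by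
  have h1 : Tendsto (fun b => ∫ x in (0:ℝ)..b, Real.exp (-x^2/2)) atTop (nhds (gTail 0)) :=
    intervalIntegral_tendsto_integral_Ioi 0 integ_exp.integrableOn tendsto_id
  have h2 : Tendsto (fun b => gTail 0 - ∫ x in (0:ℝ)..b, Real.exp (-x^2/2)) atTop
      (nhds (gTail 0 - gTail 0)) := (tendsto_const_nhds).sub h1
  rw [sub_self] at h2
  apply h2.congr'
  filter_upwards [eventually_ge_atTop (0:ℝ)] with b hb
  have := gTail_split hb
  linarith

lemma gMin_tendsto : Tendsto gMin atTop (nhds 0) := by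
  have h1 : Tendsto (fun t : ℝ => Real.exp (-t)) atTop (nhds 0) :=
    Real.tendsto_exp_neg_atTop_nhds_zero
  apply squeeze_zero' ?_ ?_ h1
  · filter_upwards [eventually_ge_atTop (2:ℝ)] with t ht
    have := den_pos t
    have : 0 ≤ (t^3 + 5*t)/(t^4 + 6*t^2 + 3) := by positivity
    unfold gMin
    positivity
  · filter_upwards [eventually_ge_atTop (2:ℝ)] with t ht
    have hd := den_pos t
    have h2 : (t^3 + 5*t)/(t^4 + 6*t^2 + 3) ≤ 1 := by
      rw [div_le_one hd]; nlinarith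
    have h3 : Real.exp (-t^2/2) ≤ Real.exp (-t) := by
      apply Real.exp_le_exp.mpr; nlinarith
    unfold gMin
    calc Real.exp (-t^2/2) * ((t^3 + 5*t)/(t^4 + 6*t^2 + 3))
        ≤ Real.exp (-t^2/2) * 1 := by
          apply mul_le_mul_of_nonneg_left h2 (Real.exp_pos _).le
      _ ≤ Real.exp (-t) := by rw [mul_one]; exact h3

lemma gMin_le_gTail (t : ℝ) : gMin t ≤ gTail t := by
  have hlim : Tendsto (fun b => gTail b - gMin b) atTop (nhds 0) := by
    simpa using gTail_tendsto.sub gMin_tendsto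
  have h := le_of_tendsto hlim (b := gTail t - gMin t) ?_
  · linarith
  · filter_upwards [eventually_ge_atTop t] with b hb
    exact gDiff_antitone hb

lemma box_ineq {u x : ℝ} (hu1 : (1.75:ℝ) ≤ u) (hx4 : 4 ≤ x) (hxu : x ≤ 5.64) :
    ((x:ℝ)^2 + 6*x + 3)^2 ≤ (x + u) * (x * (x + 5)^2) := by
  have hq : (0:ℝ) ≤ 0.25*x^2 + 0.91*x - 2.6176 := by nlinarith
  have h2 : (0:ℝ) ≤ (5.64 - x) * (0.25*x^2 + 0.91*x - 2.6176) := mul_nonneg (by linarith) hq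
  have h3 : (0:ℝ) ≤ (u - 1.75) * (x * (x+5)^2) :=
    mul_nonneg (by linarith) (mul_nonneg (by linarith) (sq_nonneg _))
  nlinarith [h2, h3]

lemma case2_ineq {u x : ℝ} (hu2 : 2 ≤ u) (hx1 : 1 ≤ x) :
    ((x:ℝ)^2 + 6*x + 3)^2 ≤ (x + u) * (x * (x + 5)^2) := by
  nlinarith [mul_nonneg (by linarith : (0:ℝ) ≤ u - 2) (by positivity : (0:ℝ) ≤ x^3),
    sq_nonneg (x-1), mul_nonneg (by linarith : (0:ℝ) ≤ x-1) (by positivity : (0:ℝ) ≤ x)]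

lemma log_six : (1.75:ℝ) ≤ Real.log 6 := by
  rw [Real.le_log_iff_exp_le (by norm_num)]
  have h4 : Real.exp (1.75:ℝ) ^ (4:ℕ) = Real.exp 7 := by
    rw [← Real.exp_nat_mul]; norm_num
  have h7 : Real.exp (7:ℝ) < 1296 := by
    have : Real.exp (7:ℝ) = Real.exp 1 ^ (7:ℕ) := by
      rw [← Real.exp_nat_mul]; norm_num
    rw [this]
    calc Real.exp 1 ^ (7:ℕ) < 2.7182818286 ^ (7:ℕ) := by
          apply pow_lt_pow_left₀ Real.exp_one_lt_d9 (Real.exp_pos 1).le; norm_num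
      _ ≤ 1296 := by norm_num
  nlinarith [Real.exp_pos (1.75:ℝ), sq_nonneg (Real.exp (1.75:ℝ) - 6),
    sq_nonneg (Real.exp (1.75:ℝ) + 6), sq_nonneg (Real.exp (1.75:ℝ)^2 - 36)]

lemma exp_two_lt : Real.exp (2:ℝ) < 7.389057 := by
  have : Real.exp (2:ℝ) = Real.exp 1 ^ (2:ℕ) := by
    rw [← Real.exp_nat_mul]; norm_num
  rw [this]
  nlinarith [Real.exp_one_lt_d9, Real.exp_pos 1]

lemma core_poly {s : ℝ} (hs : 6 ≤ s) :
    ((s - Real.log s)^2 + 6*(s - Real.log s) + 3)^2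
      ≤ s * ((s - Real.log s) * ((s - Real.log s) + 5)^2) := by
  have hs0 : (0:ℝ) < s := by linarith
  have hu1 : (1.75:ℝ) ≤ Real.log s :=
    le_trans log_six (Real.log_le_log (by norm_num) (by linarith))
  have hx1 : 1 ≤ s - Real.log s := by
    have := Real.log_le_sub_one_of_pos hs0; linarith
  have hss : s = (s - Real.log s) + Real.log s := by ring
  rcases le_or_gt (Real.log s) 2 with hu2 | hu2
  · have hse : s ≤ Real.exp 2 := by
      calc s = Real.exp (Real.log s) := (Real.exp_log hs0).symm
        _ ≤ Real.exp 2 := Real.exp_le_exp.mpr hu2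
    have h2lt := exp_two_lt
    have := box_ineq hu1 (by linarith : 4 ≤ s - Real.log s) (by linarith : s - Real.log s ≤ 5.64)
    calc ((s - Real.log s)^2 + 6*(s - Real.log s) + 3)^2
        ≤ ((s - Real.log s) + Real.log s) * ((s - Real.log s) * ((s - Real.log s) + 5)^2) := this
      _ = s * ((s - Real.log s) * ((s - Real.log s) + 5)^2) := by ring_nf
  · have := case2_ineq hu2.le hx1
    calc ((s - Real.log s)^2 + 6*(s - Real.log s) + 3)^2
        ≤ ((s - Real.log s) + Real.log s) * ((s - Real.log s) * ((s - Real.log s) + 5)^2) := this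
      _ = s * ((s - Real.log s) * ((s - Real.log s) + 5)^2) := by ring_nf

lemma core_tail {s : ℝ} (hs : 6 ≤ s) :
    Real.exp (-(s - Real.log s)/2) / Real.sqrt s
      ≤ gTail (Real.sqrt (s - Real.log s)) := by
  have hs0 : (0:ℝ) < s := by linarith
  have hx1 : 1 ≤ s - Real.log s := by
    have := Real.log_le_sub_one_of_pos hs0; linarith
  set x := s - Real.log s with hxdef
  set t := Real.sqrt x with htdef
  have hx0 : (0:ℝ) ≤ x := by linarith
  have ht2 : t^2 = x := Real.sq_sqrt hx0
  have ht0 : 0 < t := Real.sqrt_pos.mpr (by linarith)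
  have hss : (0:ℝ) < Real.sqrt s := Real.sqrt_pos.mpr hs0
  have hr : 1 / Real.sqrt s ≤ (t^3 + 5*t)/(t^4 + 6*t^2 + 3) := by
    rw [div_le_div_iff₀ hss (den_pos t)]
    have key : t^4 + 6*t^2 + 3 ≤ Real.sqrt s * (t * (x + 5)) := by
      have hrhs : Real.sqrt s * (t * (x + 5)) = Real.sqrt (s * (x * (x+5)^2)) := by
        rw [Real.sqrt_mul hs0.le, Real.sqrt_mul hx0, Real.sqrt_sq (by linarith : (0:ℝ) ≤ x + 5)]
      have hlhs : t^4 + 6*t^2 + 3 = Real.sqrt ((x^2 + 6*x + 3)^2) := by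
        rw [Real.sqrt_sq (by nlinarith : (0:ℝ) ≤ x^2 + 6*x + 3)]
        nlinarith [ht2]
      rw [hlhs, hrhs]
      exact Real.sqrt_le_sqrt (core_poly hs)
    calc 1 * (t^4 + 6*t^2 + 3) = t^4 + 6*t^2 + 3 := by ring
      _ ≤ Real.sqrt s * (t * (x+5)) := key
      _ = (t^3 + 5*t) * Real.sqrt s := by rw [← ht2]; ring
  have hmin : Real.exp (-x/2) / Real.sqrt s ≤ gMin t := by
    rw [div_eq_mul_one_div]
    unfold gMin
    rw [show -t^2/2 = -x/2 by rw [ht2]]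
    exact mul_le_mul_of_nonneg_left hr (Real.exp_pos _).le
  exact le_trans hmin (gMin_le_gTail t)

/-- For `M_n` the maximum of `n` independent standard normals, `N = log(n²/(2π))`
and `L_α = −2 log(−log α)`: if `N + L_α ≥ 6` then
`P(M_n ≥ (N + L_α − log(N + L_α))^{1/2}) ≥ 1 − α`. -/
theorem max_independent_gaussian_tail_lower_bound
    {Ω : Type*} [MeasurableSpace Ω] (μ : Measure Ω) [IsProbabilityMeasure μ]
    (n : ℕ) (hn : 0 < n)
    (X : Fin n → Ω → ℝ) (hXmeas : ∀ i, Measurable (X i))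
    (hXindep : iIndepFun X μ)
    (hXdist : ∀ i, Measure.map (X i) μ = gaussianReal 0 1)
    (M : Ω → ℝ) (hM : ∀ ω, M ω = ⨆ i, X i ω)
    (N : ℝ) (hN : N = Real.log (n ^ 2 / (2 * Real.pi)))
    (α : ℝ) (hα0 : 0 < α) (hα1 : α < 1)
    (L : ℝ) (hL : L = -2 * Real.log (-Real.log α))
    (h6 : 6 ≤ N + L) :
    1 - α ≤ (μ {ω | Real.sqrt (N + L - Real.log (N + L)) ≤ M ω}).toReal := by
  have hn1 : (1:ℝ) ≤ (n:ℝ) := by exact_mod_cast hn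
  have hπ : (0:ℝ) < 2*π := by positivity
  set s := N + L with hs
  set t := Real.sqrt (s - Real.log s) with ht
  set G := gaussianReal 0 1 (Set.Iio t) with hG
  have hG1 : G ≤ 1 := prob_le_one
  set g := G.toReal with hg
  have hg0 : (0:ℝ) ≤ g := ENNReal.toReal_nonneg
  -- tail measure
  have hIci : gaussianReal 0 1 (Set.Ici t) = 1 - G := by
    rw [← Set.compl_Iio, measure_compl measurableSet_Iio (measure_ne_top _ _), measure_univ]
  set p := (gaussianReal 0 1 (Set.Ici t)).toReal with hpdef
  have hp : p = 1 - g := by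
    rw [hpdef, hIci, ENNReal.toReal_sub_of_le hG1 ENNReal.one_ne_top, ENNReal.toReal_one]
  -- tail integral formula
  have hIoi : (gaussianReal 0 1 (Set.Ioi t)).toReal = (Real.sqrt (2*π))⁻¹ * gTail t := by
    rw [gaussianReal_apply_eq_integral 0 one_ne_zero,
      ENNReal.toReal_ofReal (integral_nonneg fun x => gaussianPDFReal_nonneg 0 1 x)]
    simp only [gaussianPDFReal, NNReal.coe_one, mul_one, sub_zero]
    rw [integral_const_mul]
    rfl
  have hp_ge : (Real.sqrt (2*π))⁻¹ * gTail t ≤ p := by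
    rw [← hIoi, hpdef]
    exact ENNReal.toReal_mono (measure_ne_top _ _) (measure_mono Set.Ioi_subset_Ici_self)
  -- n = sqrt(2π) exp(N/2)
  have hexpN : Real.exp N = (n:ℝ)^2/(2*π) := by
    rw [hN]; exact Real.exp_log (by positivity)
  have hee : Real.exp (N/2) * Real.exp (N/2) = Real.exp N := by
    rw [← Real.exp_add]; ring_nf
  have hnR : Real.sqrt (2*π) * Real.exp (N/2) = (n:ℝ) := by
    have h2 : (Real.sqrt (2*π) * Real.exp (N/2))^2 = (n:ℝ)^2 := by
      calc (Real.sqrt (2*π) * Real.exp (N/2))^2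
          = (Real.sqrt (2*π))^2 * (Real.exp (N/2) * Real.exp (N/2)) := by ring
        _ = (2*π) * Real.exp N := by rw [Real.sq_sqrt hπ.le, hee]
        _ = (n:ℝ)^2 := by rw [hexpN]; field_simp
    have hpos1 : (0:ℝ) < Real.sqrt (2*π) * Real.exp (N/2) := by positivity
    calc Real.sqrt (2*π) * Real.exp (N/2) = Real.sqrt ((Real.sqrt (2*π) * Real.exp (N/2))^2) :=
          (Real.sqrt_sq hpos1.le).symm
      _ = Real.sqrt ((n:ℝ)^2) := by rw [h2]
      _ = (n:ℝ) := Real.sqrt_sq (by linarith)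
  -- -log α
  have hlogα : Real.log α < 0 := Real.log_neg hα0 hα1
  have hexpL : Real.exp (-(L/2)) = -Real.log α := by
    rw [hL]; rw [show -(-2 * Real.log (-Real.log α) / 2) = Real.log (-Real.log α) by ring]
    exact Real.exp_log (by linarith)
  have hs0 : (0:ℝ) < s := by linarith
  have hss : (0:ℝ) < Real.sqrt s := Real.sqrt_pos.mpr hs0
  have hsqrt_s : Real.exp (Real.log s / 2) = Real.sqrt s := by
    rw [Real.exp_half, Real.exp_log hs0]
  have hprod : Real.exp (N/2) * (Real.exp (-(s - Real.log s)/2) / Real.sqrt s) = -Real.log α := by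
    have h1 : Real.exp (N/2) * Real.exp (-(s - Real.log s)/2)
        = Real.exp (Real.log s / 2) * Real.exp (-(L/2)) := by
      rw [← Real.exp_add, ← Real.exp_add]
      congr 1
      rw [hs]; ring
    have h2 : Real.exp (N/2) * (Real.exp (-(s - Real.log s)/2) / Real.sqrt s)
        = (Real.exp (N/2) * Real.exp (-(s - Real.log s)/2)) / Real.sqrt s := by ring
    rw [h2, h1, hsqrt_s, hexpL]
    field_simp
  -- key inequality
  have hkey : -Real.log α ≤ (n:ℝ) * p := by
    have hcore := core_tail h6
    calc -Real.log α = Real.exp (N/2) * (Real.exp (-(s - Real.log s)/2) / Real.sqrt s) :=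
          hprod.symm
      _ ≤ Real.exp (N/2) * gTail t := by
          exact mul_le_mul_of_nonneg_left hcore (Real.exp_pos _).le
      _ = (n:ℝ) * ((Real.sqrt (2*π))⁻¹ * gTail t) := by
          rw [← hnR]
          have h2π : Real.sqrt (2*π) ≠ 0 := by positivity
          field_simp
      _ ≤ (n:ℝ) * p := mul_le_mul_of_nonneg_left hp_ge (by linarith)
  -- g^n ≤ α
  have hfin : g^n ≤ α := by
    have hgexp : g ≤ Real.exp (g - 1) := by
      have := Real.add_one_le_exp (g - 1); linarith
    have hpow : g^n ≤ Real.exp ((n:ℝ) * (g-1)) := by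
      calc g^n ≤ Real.exp (g-1) ^ n := pow_le_pow_left₀ hg0 hgexp n
        _ = Real.exp ((n:ℝ)*(g-1)) := by rw [← Real.exp_nat_mul]
    have hle : (n:ℝ)*(g-1) ≤ Real.log α := by nlinarith [hkey, hp]
    calc g^n ≤ Real.exp ((n:ℝ)*(g-1)) := hpow
      _ ≤ Real.exp (Real.log α) := Real.exp_le_exp.mpr hle
      _ = α := Real.exp_log hα0
  -- probability part
  set A := ⋂ i, X i ⁻¹' (Set.Iio t) with hA
  have hAmeas : MeasurableSet A := MeasurableSet.iInter fun i => (hXmeas i) measurableSet_Iio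
  have hμA : μ A = G ^ n := by
    rw [hA, hXindep.meas_iInter (fun i => ⟨Set.Iio t, measurableSet_Iio, rfl⟩)]
    have hfac : ∀ i : Fin n, μ (X i ⁻¹' Set.Iio t) = G := fun i => by
      rw [← Measure.map_apply (hXmeas i) measurableSet_Iio, hXdist i]
    simp [hfac, Finset.prod_const, Finset.card_univ]
  have hsub : Aᶜ ⊆ {ω | t ≤ M ω} := by
    intro ω hω
    simp only [hA, Set.compl_iInter, Set.mem_iUnion, Set.mem_compl_iff, Set.mem_preimage,
      Set.mem_Iio, not_lt] at hω
    obtain ⟨i, hi⟩ := hω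
    have hb : BddAbove (Set.range fun j => X j ω) := Set.Finite.bddAbove (Set.finite_range _)
    simp only [Set.mem_setOf_eq, hM ω]
    exact le_trans hi (le_ciSup hb i)
  have hcompl : μ Aᶜ = 1 - μ A := by
    rw [measure_compl hAmeas (measure_ne_top μ A), measure_univ]
  have hGn1 : G ^ n ≤ 1 := pow_le_one' hG1 n
  have h1 : 1 - α ≤ (μ Aᶜ).toReal := by
    rw [hcompl, hμA, ENNReal.toReal_sub_of_le hGn1 ENNReal.one_ne_top, ENNReal.toReal_one,
      ENNReal.toReal_pow]
    linarith [hfin]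
  calc 1 - α ≤ (μ Aᶜ).toReal := h1
    _ ≤ (μ {ω | t ≤ M ω}).toReal :=
        ENNReal.toReal_mono (measure_ne_top _ _) (measure_mono hsub)
end
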